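/- arXiv:1604.08909 — 11 statements merged into one kernel-verified Lean document; each statement's English description precedes it below -/
import Mathlib

section
/- In any po-group G (not necessarily directed), G satisfies RDP₀ if and only if G satisfies the Riesz Interpolation Property (RIP). -/
/-- In any po-group `G` (not necessarily directed), `G` satisfies RDP₀
if and only if `G` satisfies the Riesz Interpolation Property (RIP). -/
theorem rdp0_iff_rip {G : Type*} [AddGroup G] [PartialOrder G]
    [CovariantClass G G (· + ·) (· ≤ ·)]
    [CovariantClass G G (Function.swap (· + ·)) (· ≤ ·)] :
    (∀ a b c : G, 0 ≤ a → 0 ≤ b → 0 ≤ c → a ≤ b + c →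
      ∃ b₁ c₁ : G, 0 ≤ b₁ ∧ 0 ≤ c₁ ∧ b₁ ≤ b ∧ c₁ ≤ c ∧ a = b₁ + c₁) ↔
    (∀ a₁ a₂ b₁ b₂ : G, a₁ ≤ b₁ → a₁ ≤ b₂ → a₂ ≤ b₁ → a₂ ≤ b₂ →
      ∃ c : G, a₁ ≤ c ∧ a₂ ≤ c ∧ c ≤ b₁ ∧ c ≤ b₂) := by
  constructor
  · intro h a₁ a₂ b₁ b₂ h11 h12 h21 h22
    have ha : (0:G) ≤ -a₁ + b₁ := by simpa using add_le_add_left h11 (-a₁)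
    have hb : (0:G) ≤ -a₁ + b₂ := by simpa using add_le_add_left h12 (-a₁)
    have hc : (0:G) ≤ -a₂ + b₁ := by simpa using add_le_add_left h21 (-a₂)
    have hle : -a₁ + b₁ ≤ (-a₁ + b₂) + (-a₂ + b₁) := by
      have h2 : (0:G) ≤ -a₂ + b₂ := by simpa using add_le_add_left h22 (-a₂)
      calc -a₁ + b₁ = -a₁ + 0 + b₁ := by simp
        _ ≤ -a₁ + (b₂ + -a₂) + b₁ := by
            have : (0:G) ≤ b₂ + -a₂ := by
              have := add_le_add_right h22 (-a₂); simpa using this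
            exact add_le_add_left (add_le_add_right this _) _
        _ = (-a₁ + b₂) + (-a₂ + b₁) := by simp only [add_assoc]
    obtain ⟨b', c', hb0, hc0, hbb, hcc, heq⟩ := h _ _ _ ha hb hc hle
    refine ⟨a₁ + b', le_add_of_nonneg_right hb0, ?_, ?_, ?_⟩
    · -- a₂ ≤ a₁ + b' since a₁ + b' = b₁ - c' and a₂ + c' ≤ b₁
      have key : a₁ + b' + c' = b₁ := by
        have := congrArg (fun x => a₁ + x) heq
        simp only [← add_assoc] at this
        simp at this
        exact this.symm
      have h1 : a₂ + c' ≤ b₁ := by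
        have := add_le_add_left hcc a₂
        simpa [← add_assoc] using this
      have : a₂ + c' ≤ a₁ + b' + c' := key ▸ h1
      exact le_of_add_le_add_right this
    · -- a₁ + b' ≤ b₁
      have key : a₁ + b' + c' = b₁ := by
        have := congrArg (fun x => a₁ + x) heq
        simp only [← add_assoc] at this
        simp at this
        exact this.symm
      calc a₁ + b' = a₁ + b' + 0 := by simp
        _ ≤ a₁ + b' + c' := add_le_add_right hc0 _
        _ = b₁ := key
    · have := add_le_add_left hbb a₁
      simpa [← add_assoc] using this
  · intro h a b c ha hb hc habc
    have h1 : a + -c ≤ b := by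
      have := add_le_add_right habc (-c); simpa [add_assoc] using this
    have h2 : a + -c ≤ a := by
      have : a + -c ≤ a + 0 := add_le_add_right (neg_nonpos.2 hc) a
      simpa using this
    obtain ⟨d, hd0, hdac, hda, hdb⟩ := h 0 (a + -c) a b ha hb h2 h1
    refine ⟨d, -d + a, hd0, ?_, hdb, ?_, by simp⟩
    · simpa using add_le_add_left hda (-d)
    · have : a ≤ d + c := by
        have := add_le_add_right hdac c; simpa [add_assoc] using this
      simpa [← add_assoc] using add_le_add_left this (-d)
end

section
/- Let G be a group generated by a countable family of elements g₀,g₁,g₂,…, and let v : G → (ℝ,+) be a group homomorphism with v(gᵢ) = (1/2)ᶦ for all i ≥ 0. If every element a ∈ G with v(a) = 0 commutes with every element of G (i.e., lies in the center of G), then G is Abelian. -/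
lemma gen_commute_aux {G : Type*} [AddGroup G] (g : ℕ → G)
    (v : G →+ ℝ) (hv : ∀ i : ℕ, v (g i) = (1 / 2 : ℝ) ^ i)
    (hcentral : ∀ a : G, v a = 0 → ∀ b : G, a + b = b + a)
    {i j : ℕ} (hji : j ≤ i) : g i + g j = g j + g i := by
  have hva : v (g j - (2 ^ (i - j)) • g i) = 0 := by
    rw [map_sub, map_nsmul, hv, hv, nsmul_eq_mul]
    have : ((2 ^ (i - j) : ℕ) : ℝ) * (1 / 2 : ℝ) ^ i = (1 / 2 : ℝ) ^ j := by
      push_cast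
      have hi : (2 : ℝ) ^ i = 2 ^ (i - j) * 2 ^ j := by
        rw [← pow_add, Nat.sub_add_cancel hji]
      rw [one_div, inv_pow, hi, mul_inv, ← mul_assoc,
        mul_inv_cancel₀ (by positivity), one_mul, inv_pow]
    rw [this, sub_self]
  set n : ℕ := 2 ^ (i - j)
  have ha := hcentral _ hva
  have h1 : g j = (g j - n • g i) + n • g i := by rw [sub_add_cancel]
  have h2 : n • g i + g i = g i + n • g i := by
    induction n with
    | zero => simp
    | succ k ih => rw [succ_nsmul, ih, add_assoc, ih]
  calc g i + g j = g i + ((g j - n • g i) + n • g i) := by rw [← h1]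
    _ = (g j - n • g i) + (g i + n • g i) := by
        rw [← add_assoc, ← ha (g i), add_assoc]
    _ = (g j - n • g i) + (n • g i + g i) := by rw [h2]
    _ = g j + g i := by rw [← add_assoc, ← h1]

/-- Let `G` be a group generated by countably many elements `g₀, g₁, …`,
and let `v : G → ℝ` be a group homomorphism with `v (g i) = (1/2)^i` for all `i`.
If every element `a ∈ G` with `v a = 0` commutes with every element of `G`,
then `G` is Abelian. -/
theorem abelian_of_kernel_central {G : Type*} [AddGroup G] (g : ℕ → G)
    (hgen : AddSubgroup.closure (Set.range g) = ⊤)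
    (v : G →+ ℝ) (hv : ∀ i : ℕ, v (g i) = (1 / 2 : ℝ) ^ i)
    (hcentral : ∀ a : G, v a = 0 → ∀ b : G, a + b = b + a) :
    ∀ x y : G, x + y = y + x := by
  have hgg : ∀ i j : ℕ, g i + g j = g j + g i := by
    intro i j
    rcases le_total j i with h | h
    · exact gen_commute_aux g v hv hcentral h
    · exact (gen_commute_aux g v hv hcentral h).symm
  -- every x commutes with each generator
  have hx : ∀ x : G, ∀ i : ℕ, x + g i = g i + x := by
    intro x i
    have hx' : x ∈ AddSubgroup.centralizer {g i} := by
      have : AddSubgroup.closure (Set.range g) ≤ AddSubgroup.centralizer {g i} := by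
        rw [AddSubgroup.closure_le]
        rintro _ ⟨j, rfl⟩
        show _ ∈ AddSubgroup.centralizer _
        rw [AddSubgroup.mem_centralizer_iff]
        rintro h hh
        rcases hh with rfl
        exact hgg i j
      exact this (by rw [hgen]; trivial)
    exact (AddSubgroup.mem_centralizer_iff.mp hx' (g i) rfl).symm
  intro x y
  have hy' : y ∈ AddSubgroup.centralizer {x} := by
    have : AddSubgroup.closure (Set.range g) ≤ AddSubgroup.centralizer {x} := by
      rw [AddSubgroup.closure_le]
      rintro _ ⟨j, rfl⟩
      show _ ∈ AddSubgroup.centralizer _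
      rw [AddSubgroup.mem_centralizer_iff]
      rintro h rfl
      exact hx h j
    exact this (by rw [hgen]; trivial)
  exact (AddSubgroup.mem_centralizer_iff.mp hy' x rfl)
end

section
/- Let A be an arbitrary (possibly non-Abelian) group equipped with the trivial partial order (a ≤ b iff a = b), so that A is a po-group, and let G be a po-group satisfying RDP₁. Then the lexicographic product A ×⃗ G satisfies RDP₁. -/
/-- A po-group satisfies RDP₁ if every equation `a₁ + a₂ = b₁ + b₂` of positive elements
admits a Riesz decomposition `c₁₁, c₁₂, c₂₁, c₂₂ ≥ 0` in which any `0 ≤ x ≤ c₁₂` and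
`0 ≤ y ≤ c₂₁` commute. -/
def RDP1 (G : Type*) [AddGroup G] [PartialOrder G] : Prop :=
  ∀ a₁ a₂ b₁ b₂ : G, 0 ≤ a₁ → 0 ≤ a₂ → 0 ≤ b₁ → 0 ≤ b₂ → a₁ + a₂ = b₁ + b₂ →
    ∃ c₁₁ c₁₂ c₂₁ c₂₂ : G, 0 ≤ c₁₁ ∧ 0 ≤ c₁₂ ∧ 0 ≤ c₂₁ ∧ 0 ≤ c₂₂ ∧
      a₁ = c₁₁ + c₁₂ ∧ a₂ = c₂₁ + c₂₂ ∧ b₁ = c₁₁ + c₂₁ ∧ b₂ = c₁₂ + c₂₂ ∧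
      ∀ x y : G, 0 ≤ x → x ≤ c₁₂ → 0 ≤ y → y ≤ c₂₁ → x + y = y + x

/-- If `A` is an arbitrary (possibly non-Abelian) group with the trivial
partial order and `G` is a po-group with RDP₁, then the lexicographic product `A ×ₗ G`
satisfies RDP₁. -/
theorem rdp1_lex_of_trivial_order {A G : Type*}
    [AddGroup A] [PartialOrder A] (htriv : ∀ a b : A, a ≤ b ↔ a = b)
    [AddGroup G] [PartialOrder G]
    [CovariantClass G G (· + ·) (· ≤ ·)]
    [CovariantClass G G (Function.swap (· + ·)) (· ≤ ·)]
    (hG : RDP1 G) :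
    RDP1 (A ×ₗ G) := by
  have hnlt : ∀ a b : A, ¬ a < b := by
    intro a b h
    exact h.ne ((htriv a b).mp h.le)
  have hle : ∀ x y : A ×ₗ G, x ≤ y ↔ (ofLex x).1 = (ofLex y).1 ∧ (ofLex x).2 ≤ (ofLex y).2 := by
    intro x y
    exact ⟨fun h => ((Prod.Lex.le_iff).mp h).resolve_left (hnlt _ _),
      fun h => (Prod.Lex.le_iff).mpr (Or.inr h)⟩
  intro a₁ a₂ b₁ b₂ ha₁ ha₂ hb₁ hb₂ heq
  rw [hle] at ha₁ ha₂ hb₁ hb₂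
  obtain ⟨c₁₁, c₁₂, c₂₁, c₂₂, h11, h12, h21, h22, e1, e2, e3, e4, hcomm⟩ :=
    hG (ofLex a₁).2 (ofLex a₂).2 (ofLex b₁).2 (ofLex b₂).2 ha₁.2 ha₂.2 hb₁.2 hb₂.2
      (congrArg (fun p : A × G => p.2) (congrArg ofLex heq))
  have fa₁ : (ofLex a₁).1 = 0 := ha₁.1.symm
  have fa₂ : (ofLex a₂).1 = 0 := ha₂.1.symm
  have fb₁ : (ofLex b₁).1 = 0 := hb₁.1.symm
  have fb₂ : (ofLex b₂).1 = 0 := hb₂.1.symm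
  refine ⟨toLex (0, c₁₁), toLex (0, c₁₂), toLex (0, c₂₁), toLex (0, c₂₂),
    (hle _ _).mpr ⟨rfl, h11⟩, (hle _ _).mpr ⟨rfl, h12⟩,
    (hle _ _).mpr ⟨rfl, h21⟩, (hle _ _).mpr ⟨rfl, h22⟩, ?_, ?_, ?_, ?_, ?_⟩
  · apply (ofLex.injective)
    exact Prod.ext (by simpa using fa₁) e1
  · apply (ofLex.injective)
    exact Prod.ext (by simpa using fa₂) e2
  · apply (ofLex.injective)
    exact Prod.ext (by simpa using fb₁) e3
  · apply (ofLex.injective)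
    exact Prod.ext (by simpa using fb₂) e4
  · intro x y hx hxc hy hyc
    rw [hle] at hx hxc hy hyc
    apply ofLex.injective
    refine Prod.ext ?_ (hcomm _ _ hx.2 hxc.2 hy.2 hyc.2)
    have fx : (ofLex x).1 = 0 := hx.1.symm
    have fy : (ofLex y).1 = 0 := hy.1.symm
    show (ofLex x).1 + (ofLex y).1 = (ofLex y).1 + (ofLex x).1
    rw [fx, fy]
end

section
/- Let ℝ×ℝ carry the strict product ordering ≦, and let G be a directed po-group satisfying RDP. Then the lexicographic product (ℝ×ℝ) ×⃗ G satisfies RDP. -/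
/-- A po-group satisfies RDP if every equation `a₁ + a₂ = b₁ + b₂` of positive elements
admits a Riesz decomposition by four positive elements. -/
def RDP (G : Type*) [AddGroup G] [PartialOrder G] : Prop :=
  ∀ a₁ a₂ b₁ b₂ : G, 0 ≤ a₁ → 0 ≤ a₂ → 0 ≤ b₁ → 0 ≤ b₂ → a₁ + a₂ = b₁ + b₂ →
    ∃ c₁₁ c₁₂ c₂₁ c₂₂ : G, 0 ≤ c₁₁ ∧ 0 ≤ c₁₂ ∧ 0 ≤ c₂₁ ∧ 0 ≤ c₂₂ ∧
      a₁ = c₁₁ + c₁₂ ∧ a₂ = c₂₁ + c₂₂ ∧ b₁ = c₁₁ + c₂₁ ∧ b₂ = c₁₂ + c₂₂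

/-- `ℝ × ℝ` carrying the strict product ordering. -/
def StrictRR : Type := ℝ × ℝ

instance : AddCommGroup StrictRR := inferInstanceAs (AddCommGroup (ℝ × ℝ))

/-- The strict product ordering: `(a, b) ≦ (c, d)` iff `(a = c ∧ b = d)` or
`(a < c ∧ b < d)`. -/
instance : PartialOrder StrictRR where
  le x y := x = y ∨ (Prod.fst x < Prod.fst y ∧ Prod.snd x < Prod.snd y)
  le_refl x := Or.inl rfl
  le_trans x y z hxy hyz := by
    rcases hxy with rfl | hxy
    · exact hyz
    · rcases hyz with rfl | hyz
      · exact Or.inr hxy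
      · exact Or.inr ⟨lt_trans hxy.1 hyz.1, lt_trans hxy.2 hyz.2⟩
  le_antisymm x y hxy hyx := by
    rcases hxy with rfl | hxy
    · rfl
    · rcases hyx with rfl | hyx
      · rfl
      · exact absurd hyx.1 (lt_asymm hxy.1)


section AuxRDP

set_option linter.unusedSectionVars false

lemma StrictRR.le_def (x y : StrictRR) :
    x ≤ y ↔ x = y ∨ (Prod.fst x < Prod.fst y ∧ Prod.snd x < Prod.snd y) := Iff.rfl

lemma real_interp (p₁ p₂ r₁ r₂ : ℝ) (hp₁ : 0 < p₁) (hp₂ : 0 < p₂) (hr₁ : 0 < r₁)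
    (hr₂ : 0 < r₂) (h : p₁ + p₂ = r₁ + r₂) :
    ∃ t : ℝ, 0 < t ∧ t < p₁ ∧ t < r₁ ∧ r₁ - p₂ < t := by
  refine ⟨(max 0 (r₁ - p₂) + min p₁ r₁) / 2, ?_, ?_, ?_, ?_⟩ <;>
  · have h1 : max 0 (r₁ - p₂) < min p₁ r₁ :=
      max_lt (lt_min hp₁ hr₁) (lt_min (by linarith) (by linarith))
    have h2 := le_max_left 0 (r₁ - p₂)
    have h3 := le_max_right 0 (r₁ - p₂)
    have h4 := min_le_left p₁ r₁
    have h5 := min_le_right p₁ r₁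
    linarith

variable {G : Type*} [AddGroup G] [PartialOrder G]

lemma lex_zero (k : G) (hk : 0 ≤ k) :
    (0 : StrictRR ×ₗ G) ≤ toLex (((0,0) : StrictRR), k) :=
  Prod.Lex.le_iff.mpr (Or.inr ⟨rfl, hk⟩)

lemma lex_pos (u v : ℝ) (k : G) (h1 : 0 < u) (h2 : 0 < v) :
    (0 : StrictRR ×ₗ G) ≤ toLex (((u,v) : StrictRR), k) := by
  have hle : (0:StrictRR) ≤ ((u,v):StrictRR) := Or.inr ⟨h1, h2⟩
  have hne : (0:StrictRR) ≠ ((u,v):StrictRR) := fun he => h1.ne (congrArg Prod.fst he)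
  exact Prod.Lex.le_iff.mpr (Or.inl (lt_of_le_of_ne hle hne))

lemma lex_eq {p q u₁ v₁ u₂ v₂ : ℝ} {g k₁ k₂ : G} (h1 : p = u₁ + u₂) (h2 : q = v₁ + v₂)
    (h3 : g = k₁ + k₂) :
    toLex (((p,q):StrictRR), g) = toLex (((u₁,v₁):StrictRR), k₁) + toLex (((u₂,v₂):StrictRR), k₂) := by
  subst h1; subst h2; subst h3; rfl

lemma pos_cone (p q : ℝ) (g : G)
    (h : (0 : StrictRR ×ₗ G) ≤ toLex (((p,q):StrictRR), g)) :
    (p = 0 ∧ q = 0 ∧ 0 ≤ g) ∨ (0 < p ∧ 0 < q) := by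
  rcases Prod.Lex.le_iff.mp h with hlt | ⟨heq, hg⟩
  · right
    rcases (StrictRR.le_def _ _).mp hlt.le with heq | ⟨h1, h2⟩
    · exact absurd heq hlt.ne
    · exact ⟨h1, h2⟩
  · exact Or.inl ⟨(congrArg Prod.fst heq).symm, (congrArg Prod.snd heq).symm, hg⟩

variable [CovariantClass G G (· + ·) (· ≤ ·)]
  [CovariantClass G G (Function.swap (· + ·)) (· ≤ ·)]

lemma patA2 (g₁ g₂ h₁ h₂ : G) (h : g₁ + g₂ = h₁ + h₂) : g₂ = (-g₁ + h₁) + h₂ := by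
  rw [add_assoc, ← h, neg_add_cancel_left]

lemma patA3 (g₁ h₁ : G) : h₁ = g₁ + (-g₁ + h₁) := (add_neg_cancel_left g₁ h₁).symm

lemma patB4 (g₁ g₂ h₁ h₂ : G) (h : g₁ + g₂ = h₁ + h₂) : h₂ = (-h₁ + g₁) + g₂ := by
  rw [add_assoc, h, neg_add_cancel_left]

lemma shiftR (hdir : ∀ x y : G, ∃ z : G, x ≤ z ∧ y ≤ z) (hG : RDP G)
    (g₁ g₂ h₁ h₂ : G) (hg₁ : 0 ≤ g₁) (hh₁ : 0 ≤ h₁) (h : g₁ + g₂ = h₁ + h₂) :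
    ∃ k₁₁ k₁₂ k₂₁ k₂₂ : G, 0 ≤ k₁₁ ∧ 0 ≤ k₁₂ ∧ 0 ≤ k₂₁ ∧
      g₁ = k₁₁ + k₁₂ ∧ g₂ = k₂₁ + k₂₂ ∧ h₁ = k₁₁ + k₂₁ ∧ h₂ = k₁₂ + k₂₂ := by
  obtain ⟨w, hw1, hw2⟩ := hdir (-g₂) (-h₂)
  have p2 : 0 ≤ g₂ + w := by have := add_le_add_right hw1 g₂; simpa using this
  have p4 : 0 ≤ h₂ + w := by have := add_le_add_right hw2 h₂; simpa using this
  obtain ⟨d₁₁, d₁₂, d₂₁, d₂₂, c1, c2, c3, c4, e1, e2, e3, e4⟩ :=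
    hG g₁ (g₂ + w) h₁ (h₂ + w) hg₁ p2 hh₁ p4 (by rw [← add_assoc, h, add_assoc])
  refine ⟨d₁₁, d₁₂, d₂₁, d₂₂ + -w, c1, c2, c3, e1, ?_, e3, ?_⟩
  · rw [← add_assoc, ← e2, add_neg_cancel_right]
  · rw [← add_assoc, ← e4, add_neg_cancel_right]

lemma shiftL (hdir : ∀ x y : G, ∃ z : G, x ≤ z ∧ y ≤ z) (hG : RDP G)
    (g₁ g₂ h₁ h₂ : G) (hg₂ : 0 ≤ g₂) (hh₂ : 0 ≤ h₂) (h : g₁ + g₂ = h₁ + h₂) :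
    ∃ k₁₁ k₁₂ k₂₁ k₂₂ : G, 0 ≤ k₁₂ ∧ 0 ≤ k₂₁ ∧ 0 ≤ k₂₂ ∧
      g₁ = k₁₁ + k₁₂ ∧ g₂ = k₂₁ + k₂₂ ∧ h₁ = k₁₁ + k₂₁ ∧ h₂ = k₁₂ + k₂₂ := by
  obtain ⟨w, hw1, hw2⟩ := hdir (-g₁) (-h₁)
  have p1 : 0 ≤ w + g₁ := by have := add_le_add_left hw1 g₁; simpa using this
  have p3 : 0 ≤ w + h₁ := by have := add_le_add_left hw2 h₁; simpa using this
  obtain ⟨d₁₁, d₁₂, d₂₁, d₂₂, c1, c2, c3, c4, e1, e2, e3, e4⟩ :=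
    hG (w + g₁) g₂ (w + h₁) h₂ p1 hg₂ p3 hh₂ (by rw [add_assoc, h, add_assoc])
  refine ⟨-w + d₁₁, d₁₂, d₂₁, d₂₂, c2, c3, c4, ?_, e2, ?_, e4⟩
  · rw [add_assoc, ← e1, neg_add_cancel_left]
  · rw [add_assoc, ← e3, neg_add_cancel_left]

theorem rdp_key (hdir : ∀ x y : G, ∃ z : G, x ≤ z ∧ y ≤ z) (hG : RDP G)
    (p₁ q₁ p₂ q₂ r₁ s₁ r₂ s₂ : ℝ) (g₁ g₂ h₁ h₂ : G)
    (ha₁ : (0 : StrictRR ×ₗ G) ≤ toLex (((p₁,q₁):StrictRR), g₁))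
    (ha₂ : (0 : StrictRR ×ₗ G) ≤ toLex (((p₂,q₂):StrictRR), g₂))
    (hb₁ : (0 : StrictRR ×ₗ G) ≤ toLex (((r₁,s₁):StrictRR), h₁))
    (hb₂ : (0 : StrictRR ×ₗ G) ≤ toLex (((r₂,s₂):StrictRR), h₂))
    (hsum : toLex (((p₁,q₁):StrictRR),g₁) + toLex (((p₂,q₂):StrictRR),g₂)
          = toLex (((r₁,s₁):StrictRR),h₁) + toLex (((r₂,s₂):StrictRR),h₂)) :
    ∃ c₁₁ c₁₂ c₂₁ c₂₂ : StrictRR ×ₗ G, 0 ≤ c₁₁ ∧ 0 ≤ c₁₂ ∧ 0 ≤ c₂₁ ∧ 0 ≤ c₂₂ ∧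
      toLex (((p₁,q₁):StrictRR),g₁) = c₁₁ + c₁₂ ∧ toLex (((p₂,q₂):StrictRR),g₂) = c₂₁ + c₂₂ ∧
      toLex (((r₁,s₁):StrictRR),h₁) = c₁₁ + c₂₁ ∧ toLex (((r₂,s₂):StrictRR),h₂) = c₁₂ + c₂₂ := by
  have hg : g₁ + g₂ = h₁ + h₂ := congrArg (fun z => (ofLex z).2) hsum
  have hP : p₁ + p₂ = r₁ + r₂ := congrArg (fun z => (((ofLex z).1 : ℝ × ℝ)).1) hsum
  have hQ : q₁ + q₂ = s₁ + s₂ := congrArg (fun z => (((ofLex z).1 : ℝ × ℝ)).2) hsum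
  rcases pos_cone _ _ _ ha₁ with ⟨hp₁, hq₁, hg₁⟩ | ⟨hp₁, hq₁⟩ <;>
  rcases pos_cone _ _ _ ha₂ with ⟨hp₂, hq₂, hg₂⟩ | ⟨hp₂, hq₂⟩ <;>
  rcases pos_cone _ _ _ hb₁ with ⟨hr₁, hs₁, hh₁⟩ | ⟨hr₁, hs₁⟩ <;>
  rcases pos_cone _ _ _ hb₂ with ⟨hr₂, hs₂, hh₂⟩ | ⟨hr₂, hs₂⟩
  -- 1: Z Z Z Z
  · obtain ⟨k₁₁, k₁₂, k₂₁, k₂₂, c1, c2, c3, c4, e1, e2, e3, e4⟩ :=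
      hG g₁ g₂ h₁ h₂ hg₁ hg₂ hh₁ hh₂ hg
    exact ⟨toLex ((0,0), k₁₁), toLex ((0,0), k₁₂), toLex ((0,0), k₂₁), toLex ((0,0), k₂₂),
      lex_zero _ c1, lex_zero _ c2, lex_zero _ c3, lex_zero _ c4,
      lex_eq (by linarith) (by linarith) e1, lex_eq (by linarith) (by linarith) e2,
      lex_eq (by linarith) (by linarith) e3, lex_eq (by linarith) (by linarith) e4⟩
  -- 2: Z Z Z P
  · exfalso; linarith
  -- 3: Z Z P Z
  · exfalso; linarith
  -- 4: Z Z P P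
  · exfalso; linarith
  -- 5: Z P Z Z
  · exfalso; linarith
  -- 6: Z P Z P
  · obtain ⟨k₁₁, k₁₂, k₂₁, k₂₂, c1, c2, c3, e1, e2, e3, e4⟩ :=
      shiftR hdir hG g₁ g₂ h₁ h₂ hg₁ hh₁ hg
    exact ⟨toLex ((0,0), k₁₁), toLex ((0,0), k₁₂), toLex ((0,0), k₂₁), toLex ((p₂,q₂), k₂₂),
      lex_zero _ c1, lex_zero _ c2, lex_zero _ c3, lex_pos _ _ _ hp₂ hq₂,
      lex_eq (by linarith) (by linarith) e1, lex_eq (by linarith) (by linarith) e2,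
      lex_eq (by linarith) (by linarith) e3, lex_eq (by linarith) (by linarith) e4⟩
  -- 7: Z P P Z
  · exact ⟨toLex ((0,0), g₁), toLex ((0,0), (0:G)), toLex ((p₂,q₂), -g₁ + h₁), toLex ((0,0), h₂),
      lex_zero _ hg₁, lex_zero _ le_rfl, lex_pos _ _ _ hp₂ hq₂, lex_zero _ hh₂,
      lex_eq (by linarith) (by linarith) (add_zero g₁).symm,
      lex_eq (by linarith) (by linarith) (patA2 g₁ g₂ h₁ h₂ hg),
      lex_eq (by linarith) (by linarith) (patA3 g₁ h₁),
      lex_eq (by linarith) (by linarith) (zero_add h₂).symm⟩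
  -- 8: Z P P P
  · exact ⟨toLex ((0,0), g₁), toLex ((0,0), (0:G)), toLex ((r₁,s₁), -g₁ + h₁), toLex ((r₂,s₂), h₂),
      lex_zero _ hg₁, lex_zero _ le_rfl, lex_pos _ _ _ hr₁ hs₁, lex_pos _ _ _ hr₂ hs₂,
      lex_eq (by linarith) (by linarith) (add_zero g₁).symm,
      lex_eq (by linarith) (by linarith) (patA2 g₁ g₂ h₁ h₂ hg),
      lex_eq (by linarith) (by linarith) (patA3 g₁ h₁),
      lex_eq (by linarith) (by linarith) (zero_add h₂).symm⟩
  -- 9: P Z Z Z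
  · exfalso; linarith
  -- 10: P Z Z P
  · exact ⟨toLex ((0,0), h₁), toLex ((p₁,q₁), -h₁ + g₁), toLex ((0,0), (0:G)), toLex ((0,0), g₂),
      lex_zero _ hh₁, lex_pos _ _ _ hp₁ hq₁, lex_zero _ le_rfl, lex_zero _ hg₂,
      lex_eq (by linarith) (by linarith) (patA3 h₁ g₁),
      lex_eq (by linarith) (by linarith) (zero_add g₂).symm,
      lex_eq (by linarith) (by linarith) (add_zero h₁).symm,
      lex_eq (by linarith) (by linarith) (patB4 g₁ g₂ h₁ h₂ hg)⟩
  -- 11: P Z P Z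
  · obtain ⟨k₁₁, k₁₂, k₂₁, k₂₂, c2, c3, c4, e1, e2, e3, e4⟩ :=
      shiftL hdir hG g₁ g₂ h₁ h₂ hg₂ hh₂ hg
    exact ⟨toLex ((p₁,q₁), k₁₁), toLex ((0,0), k₁₂), toLex ((0,0), k₂₁), toLex ((0,0), k₂₂),
      lex_pos _ _ _ hp₁ hq₁, lex_zero _ c2, lex_zero _ c3, lex_zero _ c4,
      lex_eq (by linarith) (by linarith) e1, lex_eq (by linarith) (by linarith) e2,
      lex_eq (by linarith) (by linarith) e3, lex_eq (by linarith) (by linarith) e4⟩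
  -- 12: P Z P P
  · exact ⟨toLex ((r₁,s₁), h₁), toLex ((r₂,s₂), -h₁ + g₁), toLex ((0,0), (0:G)), toLex ((0,0), g₂),
      lex_pos _ _ _ hr₁ hs₁, lex_pos _ _ _ hr₂ hs₂, lex_zero _ le_rfl, lex_zero _ hg₂,
      lex_eq (by linarith) (by linarith) (patA3 h₁ g₁),
      lex_eq (by linarith) (by linarith) (zero_add g₂).symm,
      lex_eq (by linarith) (by linarith) (add_zero h₁).symm,
      lex_eq (by linarith) (by linarith) (patB4 g₁ g₂ h₁ h₂ hg)⟩
  -- 13: P P Z Z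
  · exfalso; linarith
  -- 14: P P Z P
  · exact ⟨toLex ((0,0), h₁), toLex ((p₁,q₁), -h₁ + g₁), toLex ((0,0), (0:G)), toLex ((p₂,q₂), g₂),
      lex_zero _ hh₁, lex_pos _ _ _ hp₁ hq₁, lex_zero _ le_rfl, lex_pos _ _ _ hp₂ hq₂,
      lex_eq (by linarith) (by linarith) (patA3 h₁ g₁),
      lex_eq (by linarith) (by linarith) (zero_add g₂).symm,
      lex_eq (by linarith) (by linarith) (add_zero h₁).symm,
      lex_eq (by linarith) (by linarith) (patB4 g₁ g₂ h₁ h₂ hg)⟩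
  -- 15: P P P Z
  · exact ⟨toLex ((p₁,q₁), g₁), toLex ((0,0), (0:G)), toLex ((p₂,q₂), -g₁ + h₁), toLex ((0,0), h₂),
      lex_pos _ _ _ hp₁ hq₁, lex_zero _ le_rfl, lex_pos _ _ _ hp₂ hq₂, lex_zero _ hh₂,
      lex_eq (by linarith) (by linarith) (add_zero g₁).symm,
      lex_eq (by linarith) (by linarith) (patA2 g₁ g₂ h₁ h₂ hg),
      lex_eq (by linarith) (by linarith) (patA3 g₁ h₁),
      lex_eq (by linarith) (by linarith) (zero_add h₂).symm⟩
  -- 16: P P P P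
  · obtain ⟨t, ht0, htp, htr, htb⟩ := real_interp p₁ p₂ r₁ r₂ hp₁ hp₂ hr₁ hr₂ hP
    obtain ⟨u, hu0, hup, hur, hub⟩ := real_interp q₁ q₂ s₁ s₂ hq₁ hq₂ hs₁ hs₂ hQ
    exact ⟨toLex ((t,u), g₁), toLex ((p₁ - t, q₁ - u), (0:G)),
      toLex ((r₁ - t, s₁ - u), -g₁ + h₁), toLex ((p₂ - r₁ + t, q₂ - s₁ + u), h₂),
      lex_pos _ _ _ ht0 hu0, lex_pos _ _ _ (by linarith) (by linarith),
      lex_pos _ _ _ (by linarith) (by linarith), lex_pos _ _ _ (by linarith) (by linarith),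
      lex_eq (by ring) (by ring) (add_zero g₁).symm,
      lex_eq (by linarith) (by linarith) (patA2 g₁ g₂ h₁ h₂ hg),
      lex_eq (by linarith) (by linarith) (patA3 g₁ h₁),
      lex_eq (by linarith) (by linarith) (zero_add h₂).symm⟩

end AuxRDP

/-- If `ℝ × ℝ` carries the strict product ordering and `G` is a directed
po-group satisfying RDP, then the lexicographic product `(ℝ × ℝ) ×ₗ G` satisfies RDP. -/
theorem rdp_lex_strictRR {G : Type*} [AddGroup G] [PartialOrder G]
    [CovariantClass G G (· + ·) (· ≤ ·)]
    [CovariantClass G G (Function.swap (· + ·)) (· ≤ ·)]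
    (hdir : ∀ x y : G, ∃ z : G, x ≤ z ∧ y ≤ z)
    (hG : RDP G) :
    RDP (StrictRR ×ₗ G) := by
  intro a₁ a₂ b₁ b₂ ha₁ ha₂ hb₁ hb₂ hsum
  exact rdp_key hdir hG _ _ _ _ _ _ _ _ _ _ _ _ ha₁ ha₂ hb₁ hb₂ hsum
end

section
/- Let ℝ×ℝ carry the strict product ordering ≦, and let G be a non-Abelian directed po-group satisfying RDP₁. Then the element ((1,1),0) is a strong unit of the lexicographic product (ℝ×ℝ) ×⃗ G, this po-group satisfies RDP, but RDP₁ fails in it. -/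
section StrictRRLexHelpers

private lemma srr_le_iff (x y : StrictRR) : x ≤ y ↔ x = y ∨ (x.1 < y.1 ∧ x.2 < y.2) := Iff.rfl

private lemma srr_lt_iff (x y : StrictRR) : x < y ↔ x.1 < y.1 ∧ x.2 < y.2 := by
  rw [lt_iff_le_and_ne, srr_le_iff]
  constructor
  · rintro ⟨(rfl | h), hne⟩
    · exact absurd rfl hne
    · exact h
  · intro h
    exact ⟨Or.inr h, fun he => absurd (congrArg Prod.fst he) (ne_of_lt h.1)⟩

private lemma neg_comm_of_comm {G : Type*} [AddGroup G] {a b : G} (h : a + b = b + a) :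
    -a + b = b + -a := by
  apply add_right_cancel (b := a)
  rw [add_assoc, ← h, neg_add_cancel_left, add_assoc, neg_add_cancel, add_zero]

variable {G : Type*} [AddGroup G] [PartialOrder G]
  [CovariantClass G G (· + ·) (· ≤ ·)]
  [CovariantClass G G (Function.swap (· + ·)) (· ≤ ·)]

private lemma lex_le_iff' (x y : StrictRR × G) :
    toLex x ≤ toLex y ↔ x.1 < y.1 ∨ x.1 = y.1 ∧ x.2 ≤ y.2 := Prod.Lex.le_iff

private lemma lex_nonneg_iff (p : StrictRR) (g : G) :
    0 ≤ toLex (p, g) ↔ (0 < p.1 ∧ 0 < p.2) ∨ (p = 0 ∧ 0 ≤ g) := by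
  have h0 : (0 : StrictRR ×ₗ G) = toLex (0, 0) := rfl
  rw [h0, lex_le_iff', srr_lt_iff]
  constructor
  · rintro (h | ⟨h1, h2⟩)
    · exact Or.inl h
    · exact Or.inr ⟨h1.symm, h2⟩
  · rintro (h | ⟨h1, h2⟩)
    · exact Or.inl h
    · exact Or.inr ⟨h1.symm, h2⟩

private lemma lex_nonneg_pos (p : StrictRR) (h1 : 0 < p.1) (h2 : 0 < p.2) (g : G) :
    0 ≤ toLex (p, g) := (lex_nonneg_iff p g).2 (Or.inl ⟨h1, h2⟩)

private lemma lex_nonneg_zero (g : G) (hg : 0 ≤ g) : 0 ≤ toLex ((0 : StrictRR), g) :=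
  (lex_nonneg_iff 0 g).2 (Or.inr ⟨rfl, hg⟩)

private lemma lex_le_fst_lt (p q : StrictRR) (h1 : p.1 < q.1) (h2 : p.2 < q.2) (g h : G) :
    toLex (p, g) ≤ toLex (q, h) :=
  (lex_le_iff' _ _).2 (Or.inl ((srr_lt_iff p q).2 ⟨h1, h2⟩))

private lemma lex_mk_eq (p q r : StrictRR) (g h k : G) (h1 : p = q + r) (h2 : g = h + k) :
    toLex (p, g) = toLex (q, h) + toLex (r, k) := by
  subst h1; subst h2; rfl

/-- directed + RDP1 gives a common left piece decomposition with commuting remainders -/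
private lemma aux_lemA (hdir : ∀ x y : G, ∃ z : G, x ≤ z ∧ y ≤ z) (hG : RDP1 G)
    (g h : G) (hg : 0 ≤ g) (hh : 0 ≤ h) :
    ∃ x11 x12 x21 : G, 0 ≤ x11 ∧ 0 ≤ x12 ∧ 0 ≤ x21 ∧ g = x11 + x12 ∧ h = x11 + x21 ∧
      x12 + x21 = x21 + x12 := by
  obtain ⟨d, hgd, hhd⟩ := hdir g h
  obtain ⟨c11, c12, c21, c22, p11, p12, p21, p22, e1, e2, e3, e4, hc⟩ :=
    hG g (-g + d) h (-h + d) hg (by simpa using add_le_add_left hgd (-g)) hh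
      (by simpa using add_le_add_left hhd (-h))
      (by rw [add_neg_cancel_left, add_neg_cancel_left])
  exact ⟨c11, c12, c21, p11, p12, p21, e1, e3, hc c12 c21 p12 le_rfl p21 le_rfl⟩

/-- directed + RDP1 gives a common right piece decomposition with commuting remainders -/
private lemma aux_lemB (hdir : ∀ x y : G, ∃ z : G, x ≤ z ∧ y ≤ z) (hG : RDP1 G)
    (g h : G) (hg : 0 ≤ g) (hh : 0 ≤ h) :
    ∃ x12 x21 x22 : G, 0 ≤ x12 ∧ 0 ≤ x21 ∧ 0 ≤ x22 ∧ g = x21 + x22 ∧ h = x12 + x22 ∧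
      x12 + x21 = x21 + x12 := by
  obtain ⟨d, hgd, hhd⟩ := hdir g h
  obtain ⟨c11, c12, c21, c22, p11, p12, p21, p22, e1, e2, e3, e4, hc⟩ :=
    hG (d - g) g (d - h) h (sub_nonneg.2 hgd) hg (sub_nonneg.2 hhd) hh
      (by rw [sub_add_cancel, sub_add_cancel])
  exact ⟨c12, c21, c22, p12, p21, p22, e2, e4, hc c12 c21 p12 le_rfl p21 le_rfl⟩

private lemma real_split {a b c d : ℝ} (ha : 0 < a) (hb : 0 < b) (hc : 0 < c) (hd : 0 < d)
    (h : a + b = c + d) :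
    0 < a * c / (a + b) ∧ 0 < a - a * c / (a + b) ∧ 0 < c - a * c / (a + b) ∧
      0 < b - (c - a * c / (a + b)) := by
  have hs : 0 < a + b := by linarith
  have e2 : a - a * c / (a + b) = a * d / (a + b) := by
    rw [eq_div_iff hs.ne', sub_mul, div_mul_cancel₀ _ hs.ne']; linear_combination a * h
  have e3 : c - a * c / (a + b) = c * b / (a + b) := by
    field_simp; ring
  have e4 : b - (c - a * c / (a + b)) = b * d / (a + b) := by
    field_simp; linear_combination b * h
  exact ⟨div_pos (mul_pos ha hc) hs, e2 ▸ div_pos (mul_pos ha hd) hs,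
    e3 ▸ div_pos (mul_pos hc hb) hs, e4 ▸ div_pos (mul_pos hb hd) hs⟩

end StrictRRLexHelpers

set_option maxHeartbeats 1000000 in
private lemma core_rdp {G : Type*} [AddGroup G] [PartialOrder G]
    [CovariantClass G G (· + ·) (· ≤ ·)]
    [CovariantClass G G (Function.swap (· + ·)) (· ≤ ·)]
    (hdir : ∀ x y : G, ∃ z : G, x ≤ z ∧ y ≤ z) (hG : RDP1 G)
    (p₁ p₂ q₁ q₂ : StrictRR) (g₁ g₂ h₁ h₂ : G)
    (hA1 : 0 ≤ toLex (p₁, g₁)) (hA2 : 0 ≤ toLex (p₂, g₂))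
    (hB1 : 0 ≤ toLex (q₁, h₁)) (hB2 : 0 ≤ toLex (q₂, h₂))
    (hsum : toLex (p₁, g₁) + toLex (p₂, g₂) = toLex (q₁, h₁) + toLex (q₂, h₂)) :
    ∃ c₁₁ c₁₂ c₂₁ c₂₂ : StrictRR ×ₗ G, 0 ≤ c₁₁ ∧ 0 ≤ c₁₂ ∧ 0 ≤ c₂₁ ∧ 0 ≤ c₂₂ ∧
      toLex (p₁, g₁) = c₁₁ + c₁₂ ∧ toLex (p₂, g₂) = c₂₁ + c₂₂ ∧
      toLex (q₁, h₁) = c₁₁ + c₂₁ ∧ toLex (q₂, h₂) = c₁₂ + c₂₂ := by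
  have hfst : p₁ + p₂ = q₁ + q₂ := congrArg (fun z => (ofLex z).1) hsum
  have hsnd : g₁ + g₂ = h₁ + h₂ := congrArg (fun z => (ofLex z).2) hsum
  rw [lex_nonneg_iff] at hA1 hA2 hB1 hB2
  rcases hA1 with hA1 | ⟨rfl, hg₁⟩
  · rcases hB1 with hB1 | ⟨rfl, hh₁⟩
    · -- p₁ pos, q₁ pos
      rcases hA2 with hA2 | ⟨rfl, hg₂⟩
      · rcases hB2 with hB2 | ⟨rfl, hh₂⟩
        · -- PPPP: proportional split of first coordinates
          have hf1 : p₁.1 + p₂.1 = q₁.1 + q₂.1 := congrArg Prod.fst hfst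
          have hf2 : p₁.2 + p₂.2 = q₁.2 + q₂.2 := congrArg Prod.snd hfst
          obtain ⟨s11, s12, s13, s14⟩ := real_split hA1.1 hA2.1 hB1.1 hB2.1 hf1
          obtain ⟨t11, t12, t13, t14⟩ := real_split hA1.2 hA2.2 hB1.2 hB2.2 hf2
          set γ : StrictRR := (p₁.1 * q₁.1 / (p₁.1 + p₂.1), p₁.2 * q₁.2 / (p₁.2 + p₂.2))
            with hγ
          refine ⟨toLex (γ, g₁), toLex (p₁ - γ, 0), toLex (q₁ - γ, -g₁ + h₁),
            toLex (p₂ - (q₁ - γ), h₂), lex_nonneg_pos _ s11 t11 _,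
            lex_nonneg_pos _ s12 t12 _, lex_nonneg_pos _ s13 t13 _,
            lex_nonneg_pos _ s14 t14 _, ?_, ?_, ?_, ?_⟩
          · exact lex_mk_eq _ _ _ _ _ _ (by abel) (add_zero g₁).symm
          · refine lex_mk_eq _ _ _ _ _ _ (by abel) ?_
            rw [add_assoc, ← hsnd, neg_add_cancel_left]
          · exact lex_mk_eq _ _ _ _ _ _ (by abel) (add_neg_cancel_left g₁ h₁).symm
          · refine lex_mk_eq _ _ _ _ _ _ ?_ (zero_add h₂).symm
            have : p₁ - γ + (p₂ - (q₁ - γ)) = p₁ + p₂ - q₁ := by abel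
            rw [this, hfst]; abel
        · -- PPPZ
          refine ⟨toLex (p₁, g₁), toLex (0, 0), toLex (p₂, g₂ + -h₂), toLex (0, h₂),
            lex_nonneg_pos _ hA1.1 hA1.2 _, lex_nonneg_zero _ le_rfl,
            lex_nonneg_pos _ hA2.1 hA2.2 _, lex_nonneg_zero _ hh₂, ?_, ?_, ?_, ?_⟩
          · exact lex_mk_eq _ _ _ _ _ _ (add_zero p₁).symm (add_zero g₁).symm
          · exact lex_mk_eq _ _ _ _ _ _ (add_zero p₂).symm (neg_add_cancel_right g₂ h₂).symm
          · refine lex_mk_eq _ _ _ _ _ _ (by simpa using hfst.symm) ?_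
            rw [← add_assoc, hsnd, add_assoc, add_neg_cancel, add_zero]
          · exact lex_mk_eq _ _ _ _ _ _ (zero_add (0 : StrictRR)).symm (zero_add h₂).symm
      · rcases hB2 with hB2 | ⟨rfl, hh₂⟩
        · -- PZPP
          refine ⟨toLex (q₁, h₁), toLex (q₂, -h₁ + g₁), toLex (0, 0), toLex (0, g₂),
            lex_nonneg_pos _ hB1.1 hB1.2 _, lex_nonneg_pos _ hB2.1 hB2.2 _,
            lex_nonneg_zero _ le_rfl, lex_nonneg_zero _ hg₂, ?_, ?_, ?_, ?_⟩
          · exact lex_mk_eq _ _ _ _ _ _ (by simpa using hfst)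
              (add_neg_cancel_left h₁ g₁).symm
          · exact lex_mk_eq _ _ _ _ _ _ (zero_add (0 : StrictRR)).symm (zero_add g₂).symm
          · exact lex_mk_eq _ _ _ _ _ _ (add_zero q₁).symm (add_zero h₁).symm
          · refine lex_mk_eq _ _ _ _ _ _ (add_zero q₂).symm ?_
            rw [add_assoc, hsnd, neg_add_cancel_left]
        · -- PZPZ : hard case B
          obtain ⟨x12, x21, x22, hx12, hx21, hx22, eg2, eh2, comm⟩ :=
            aux_lemB hdir hG g₂ h₂ hg₂ hh₂
          have hq1 : q₁ = p₁ := by simpa using hfst.symm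
          subst hq1
          have comm' : -x12 + x21 = x21 + -x12 := neg_comm_of_comm comm
          have hkey : h₁ + x12 = g₁ + x21 := by
            apply add_right_cancel (b := x22)
            rw [add_assoc, add_assoc, ← eh2, ← eg2]; exact hsnd.symm
          refine ⟨toLex (q₁, g₁ + -x12), toLex (0, x12), toLex (0, x21), toLex (0, x22),
            lex_nonneg_pos _ hA1.1 hA1.2 _, lex_nonneg_zero _ hx12,
            lex_nonneg_zero _ hx21, lex_nonneg_zero _ hx22, ?_, ?_, ?_, ?_⟩
          · exact lex_mk_eq _ _ _ _ _ _ (add_zero q₁).symm (neg_add_cancel_right g₁ x12).symm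
          · exact lex_mk_eq _ _ _ _ _ _ (zero_add (0 : StrictRR)).symm eg2
          · refine lex_mk_eq _ _ _ _ _ _ (add_zero q₁).symm ?_
            have h1 : h₁ = g₁ + x21 + -x12 := by
              rw [← hkey, add_assoc, add_neg_cancel, add_zero]
            rw [add_assoc, comm', ← add_assoc]; exact h1
          · exact lex_mk_eq _ _ _ _ _ _ (zero_add (0 : StrictRR)).symm eh2
    · -- p₁ pos, q₁ = 0
      refine ⟨toLex (0, h₁), toLex (p₁, -h₁ + g₁), toLex (0, 0), toLex (p₂, g₂),
        lex_nonneg_zero _ hh₁, lex_nonneg_pos _ hA1.1 hA1.2 _,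
        lex_nonneg_zero _ le_rfl, (lex_nonneg_iff _ _).2 hA2, ?_, ?_, ?_, ?_⟩
      · exact lex_mk_eq _ _ _ _ _ _ (zero_add p₁).symm (add_neg_cancel_left h₁ g₁).symm
      · exact lex_mk_eq _ _ _ _ _ _ (zero_add p₂).symm (zero_add g₂).symm
      · exact lex_mk_eq _ _ _ _ _ _ (zero_add (0 : StrictRR)).symm (add_zero h₁).symm
      · refine lex_mk_eq _ _ _ _ _ _ (by simpa using hfst.symm) ?_
        rw [add_assoc, hsnd, neg_add_cancel_left]
  · rcases hB1 with hB1 | ⟨rfl, hh₁⟩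
    · -- p₁ = 0, q₁ pos
      refine ⟨toLex (0, g₁), toLex (0, 0), toLex (q₁, -g₁ + h₁), toLex (q₂, h₂),
        lex_nonneg_zero _ hg₁, lex_nonneg_zero _ le_rfl,
        lex_nonneg_pos _ hB1.1 hB1.2 _, (lex_nonneg_iff _ _).2 hB2, ?_, ?_, ?_, ?_⟩
      · exact lex_mk_eq _ _ _ _ _ _ (add_zero (0 : StrictRR)).symm (add_zero g₁).symm
      · refine lex_mk_eq _ _ _ _ _ _ (by simpa using hfst) ?_
        rw [add_assoc, ← hsnd, neg_add_cancel_left]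
      · exact lex_mk_eq _ _ _ _ _ _ (zero_add q₁).symm (add_neg_cancel_left g₁ h₁).symm
      · exact lex_mk_eq _ _ _ _ _ _ (zero_add q₂).symm (zero_add h₂).symm
    · -- p₁ = 0, q₁ = 0
      have hq2 : q₂ = p₂ := by simpa using hfst.symm
      subst hq2
      rcases hA2 with hA2 | ⟨rfl, hg₂⟩
      · -- ZPZP : hard case A
        obtain ⟨x11, x12, x21, hx11, hx12, hx21, eg1, eh1, comm⟩ :=
          aux_lemA hdir hG g₁ h₁ hg₁ hh₁
        refine ⟨toLex (0, x11), toLex (0, x12), toLex (0, x21), toLex (q₂, -x21 + g₂),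
          lex_nonneg_zero _ hx11, lex_nonneg_zero _ hx12, lex_nonneg_zero _ hx21,
          lex_nonneg_pos _ hA2.1 hA2.2 _, ?_, ?_, ?_, ?_⟩
        · exact lex_mk_eq _ _ _ _ _ _ (add_zero (0 : StrictRR)).symm eg1
        · exact lex_mk_eq _ _ _ _ _ _ (zero_add q₂).symm (add_neg_cancel_left x21 g₂).symm
        · exact lex_mk_eq _ _ _ _ _ _ (add_zero (0 : StrictRR)).symm eh1
        · refine lex_mk_eq _ _ _ _ _ _ (zero_add q₂).symm ?_
          apply add_left_cancel (a := h₁)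
          calc h₁ + h₂ = g₁ + g₂ := hsnd.symm
            _ = x11 + (x12 + g₂) := by rw [eg1, add_assoc]
            _ = x11 + (x12 + (x21 + (-x21 + g₂))) := by rw [add_neg_cancel_left]
            _ = x11 + (x12 + x21 + (-x21 + g₂)) := by rw [add_assoc x12]
            _ = x11 + (x21 + x12 + (-x21 + g₂)) := by rw [comm]
            _ = x11 + x21 + (x12 + (-x21 + g₂)) := by
                simp only [add_assoc]
            _ = h₁ + (x12 + (-x21 + g₂)) := by rw [← eh1]
      · -- ZZZZ : all in G
        rcases hB2 with hB2 | ⟨-, hh₂⟩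
        · exact absurd hB2.1 (lt_irrefl (0:ℝ))
        · obtain ⟨c11, c12, c21, c22, p11, p12, p21, p22, e1, e2, e3, e4, -⟩ :=
            hG g₁ g₂ h₁ h₂ hg₁ hg₂ hh₁ hh₂ hsnd
          exact ⟨toLex (0, c11), toLex (0, c12), toLex (0, c21), toLex (0, c22),
            lex_nonneg_zero _ p11, lex_nonneg_zero _ p12, lex_nonneg_zero _ p21,
            lex_nonneg_zero _ p22,
            lex_mk_eq _ _ _ _ _ _ (add_zero (0 : StrictRR)).symm e1,
            lex_mk_eq _ _ _ _ _ _ (add_zero (0 : StrictRR)).symm e2,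
            lex_mk_eq _ _ _ _ _ _ (add_zero (0 : StrictRR)).symm e3,
            lex_mk_eq _ _ _ _ _ _ (add_zero (0 : StrictRR)).symm e4⟩

private lemma nsmul_unit {G : Type*} [AddGroup G] [PartialOrder G]
    [CovariantClass G G (· + ·) (· ≤ ·)]
    [CovariantClass G G (Function.swap (· + ·)) (· ≤ ·)] (n : ℕ) :
    n • (toLex ((show StrictRR from ((1 : ℝ), (1 : ℝ))), (0 : G))) =
      toLex ((show StrictRR from (((n : ℝ)), ((n : ℝ)))), (0 : G)) := by
  induction n with
  | zero => simp only [zero_nsmul, Nat.cast_zero]; rfl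
  | succ n ih =>
    rw [succ_nsmul, ih]
    have h1 : (show StrictRR from (((n + 1 : ℕ) : ℝ), ((n + 1 : ℕ) : ℝ))) =
        (show StrictRR from (((n : ℕ) : ℝ), ((n : ℕ) : ℝ))) +
          (show StrictRR from ((1 : ℝ), (1 : ℝ))) := by
      show (((n + 1 : ℕ) : ℝ), ((n + 1 : ℕ) : ℝ)) = ((n : ℝ) + 1, (n : ℝ) + 1)
      push_cast; rfl
    exact (lex_mk_eq _ _ _ _ _ _ h1 (add_zero (0 : G)).symm).symm


/-- If `ℝ × ℝ` carries the strict product ordering and `G` is a non-Abelian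
directed po-group satisfying RDP₁, then `((1,1), 0)` is a strong unit of the
lexicographic product `(ℝ × ℝ) ×ₗ G`, this po-group satisfies RDP, but RDP₁ fails. -/
theorem strictRR_lex_strong_unit_rdp_not_rdp1 {G : Type*} [AddGroup G] [PartialOrder G]
    [CovariantClass G G (· + ·) (· ≤ ·)]
    [CovariantClass G G (Function.swap (· + ·)) (· ≤ ·)]
    (hdir : ∀ x y : G, ∃ z : G, x ≤ z ∧ y ≤ z)
    (hna : ∃ x y : G, x + y ≠ y + x)
    (hG : RDP1 G) :
    (0 ≤ toLex ((show StrictRR from ((1 : ℝ), (1 : ℝ))), (0 : G)) ∧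
      ∀ x : StrictRR ×ₗ G, ∃ n : ℕ,
        x ≤ n • toLex ((show StrictRR from ((1 : ℝ), (1 : ℝ))), (0 : G))) ∧
    RDP (StrictRR ×ₗ G) ∧ ¬ RDP1 (StrictRR ×ₗ G) := by

  refine ⟨⟨lex_nonneg_pos _ one_pos one_pos _, ?_⟩, ?_, ?_⟩
  · -- strong unit
    intro x
    set p : StrictRR := (ofLex x).1 with hp
    refine ⟨⌈|p.1| + |p.2|⌉₊ + 1, ?_⟩
    rw [nsmul_unit]
    have hx : x = toLex (p, (ofLex x).2) := rfl
    rw [hx]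
    have hle : |p.1| + |p.2| ≤ (⌈|p.1| + |p.2|⌉₊ : ℝ) := Nat.le_ceil _
    refine lex_le_fst_lt _ _ ?_ ?_ _ _ <;>
      · push_cast
        have := abs_nonneg p.1; have := abs_nonneg p.2
        have := le_abs_self p.1; have := le_abs_self p.2
        linarith
  · -- RDP
    intro A1 A2 B1 B2 hA1 hA2 hB1 hB2 hsum
    exact core_rdp hdir hG (ofLex A1).1 (ofLex A2).1 (ofLex B1).1 (ofLex B2).1
      (ofLex A1).2 (ofLex A2).2 (ofLex B1).2 (ofLex B2).2 hA1 hA2 hB1 hB2 hsum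
  · -- ¬ RDP1
    intro hR
    obtain ⟨x0, y0, hxy⟩ := hna
    have pos12 : (0:ℝ) < 1 ∧ (0:ℝ) < 2 := ⟨one_pos, two_pos⟩
    obtain ⟨c11, c12, c21, c22, p11, p12, p21, p22, e1, e2, e3, e4, hc⟩ :=
      hR (toLex ((show StrictRR from ((1:ℝ),(2:ℝ))), (0:G)))
        (toLex ((show StrictRR from ((2:ℝ),(1:ℝ))), (0:G)))
        (toLex ((show StrictRR from ((2:ℝ),(1:ℝ))), (0:G)))
        (toLex ((show StrictRR from ((1:ℝ),(2:ℝ))), (0:G)))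
        (lex_nonneg_pos _ pos12.1 pos12.2 _) (lex_nonneg_pos _ pos12.2 pos12.1 _)
        (lex_nonneg_pos _ pos12.2 pos12.1 _) (lex_nonneg_pos _ pos12.1 pos12.2 _)
        (congrArg toLex (Prod.ext (add_comm _ _) rfl))
    set a : StrictRR := (ofLex c11).1 with ha
    set b : StrictRR := (ofLex c12).1 with hb
    set c : StrictRR := (ofLex c21).1 with hcc
    have f1 : ((1:ℝ),(2:ℝ)) = a + b := congrArg (fun z => (ofLex z).1) e1
    have f3 : ((2:ℝ),(1:ℝ)) = a + c := congrArg (fun z => (ofLex z).1) e3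
    have f11 : (1:ℝ) = a.1 + b.1 := congrArg Prod.fst f1
    have f12 : (2:ℝ) = a.2 + b.2 := congrArg Prod.snd f1
    have f31 : (2:ℝ) = a.1 + c.1 := congrArg Prod.fst f3
    have f32 : (1:ℝ) = a.2 + c.2 := congrArg Prod.snd f3
    have p12' := (lex_nonneg_iff b (ofLex c12).2).1 p12
    have p21' := (lex_nonneg_iff c (ofLex c21).2).1 p21
    have hbpos : 0 < b.1 ∧ 0 < b.2 := by
      rcases p12' with h | ⟨hb0, -⟩
      · exact h
      · rcases p21' with h | ⟨hc0, -⟩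
        · have : b.2 = 0 := congrArg Prod.snd hb0
          linarith [h.2]
        · have hb2 : b.2 = 0 := congrArg Prod.snd hb0
          have hc2 : c.2 = 0 := congrArg Prod.snd hc0
          linarith
    have hcpos : 0 < c.1 ∧ 0 < c.2 := by
      rcases p21' with h | ⟨hc0, -⟩
      · exact h
      · rcases p12' with h | ⟨hb0, -⟩
        · have : c.1 = 0 := congrArg Prod.fst hc0
          linarith [h.1]
        · have hb1 : b.1 = 0 := congrArg Prod.fst hb0
          have hc1 : c.1 = 0 := congrArg Prod.fst hc0
          linarith
    have hcomm := hc (toLex ((b.1/2, b.2/2), x0)) (toLex ((c.1/2, c.2/2), y0))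
      (lex_nonneg_pos _ (by simpa using half_pos hbpos.1) (by simpa using half_pos hbpos.2) _)
      (lex_le_fst_lt _ _ (half_lt_self hbpos.1) (half_lt_self hbpos.2) _ _)
      (lex_nonneg_pos _ (by simpa using half_pos hcpos.1) (by simpa using half_pos hcpos.2) _)
      (lex_le_fst_lt _ _ (half_lt_self hcpos.1) (half_lt_self hcpos.2) _ _)
    exact hxy (congrArg (fun z => (ofLex z).2) hcomm)
end

section
/- Let A be an antilattice po-group satisfying RDP, and let a₁,a₂,b₁,b₂ ∈ A⁺ satisfy a₁+a₂ = b₁+b₂ with a₁ and b₁ non-comparable. Then (1) there exists an RDP decomposition n₁₁,n₁₂,n₂₁,n₂₂ ∈ A⁺ (a₁ = n₁₁+n₁₂, a₂ = n₂₁+n₂₂, b₁ = n₁₁+n₂₁, b₂ = n₁₂+n₂₂) with n₁₂ > 0, n₂₁ > 0 and n₁₂, n₂₁ non-comparable; and (2) every RDP decomposition m₁₁,m₁₂,m₂₁,m₂₂ ∈ A⁺ of this equation has m₁₂ > 0 and m₂₁ > 0. -/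
/-- A poset is an antilattice if only comparable pairs of elements have a join or a meet. -/
def IsAntilattice (P : Type*) [PartialOrder P] : Prop :=
  ∀ a b : P, ((∃ c, IsLUB {a, b} c) ∨ (∃ c, IsGLB {a, b} c)) → (a ≤ b ∨ b ≤ a)

/-- In an antilattice po-group `A` with RDP, if `a₁ + a₂ = b₁ + b₂` with
`a₁, a₂, b₁, b₂ ≥ 0` and `a₁ ∥ b₁` (non-comparable), then (1) there is an RDP
decomposition `n₁₁, n₁₂, n₂₁, n₂₂` with `n₁₂ > 0`, `n₂₁ > 0` and `n₁₂ ∥ n₂₁`; and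
(2) every RDP decomposition `m₁₁, m₁₂, m₂₁, m₂₂` of this equation has `m₁₂ > 0` and
`m₂₁ > 0`. -/
theorem antilattice_rdp_decomposition {A : Type*} [AddGroup A] [PartialOrder A]
    [CovariantClass A A (· + ·) (· ≤ ·)]
    [CovariantClass A A (Function.swap (· + ·)) (· ≤ ·)]
    (hanti : IsAntilattice A) (hA : RDP A)
    (a₁ a₂ b₁ b₂ : A) (ha₁ : 0 ≤ a₁) (ha₂ : 0 ≤ a₂) (hb₁ : 0 ≤ b₁) (hb₂ : 0 ≤ b₂)
    (heq : a₁ + a₂ = b₁ + b₂) (hnc : ¬ a₁ ≤ b₁ ∧ ¬ b₁ ≤ a₁) :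
    (∃ n₁₁ n₁₂ n₂₁ n₂₂ : A, 0 ≤ n₁₁ ∧ 0 ≤ n₁₂ ∧ 0 ≤ n₂₁ ∧ 0 ≤ n₂₂ ∧
      a₁ = n₁₁ + n₁₂ ∧ a₂ = n₂₁ + n₂₂ ∧ b₁ = n₁₁ + n₂₁ ∧ b₂ = n₁₂ + n₂₂ ∧
      0 < n₁₂ ∧ 0 < n₂₁ ∧ ¬ n₁₂ ≤ n₂₁ ∧ ¬ n₂₁ ≤ n₁₂) ∧
    (∀ m₁₁ m₁₂ m₂₁ m₂₂ : A, 0 ≤ m₁₁ → 0 ≤ m₁₂ → 0 ≤ m₂₁ → 0 ≤ m₂₂ →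
      a₁ = m₁₁ + m₁₂ → a₂ = m₂₁ + m₂₂ → b₁ = m₁₁ + m₂₁ → b₂ = m₁₂ + m₂₂ →
      0 < m₁₂ ∧ 0 < m₂₁) := by
  obtain ⟨hab, hba⟩ := hnc
  have key : ∀ m₁₁ m₁₂ m₂₁ m₂₂ : A, 0 ≤ m₁₁ → 0 ≤ m₁₂ → 0 ≤ m₂₁ → 0 ≤ m₂₂ →
      a₁ = m₁₁ + m₁₂ → a₂ = m₂₁ + m₂₂ → b₁ = m₁₁ + m₂₁ → b₂ = m₁₂ + m₂₂ →
      0 < m₁₂ ∧ 0 < m₂₁ ∧ ¬ m₁₂ ≤ m₂₁ ∧ ¬ m₂₁ ≤ m₁₂ := by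
    intro m₁₁ m₁₂ m₂₁ m₂₂ h11 h12 h21 h22 e1 e2 e3 e4
    have hle : ¬ m₁₂ ≤ m₂₁ := by
      intro h
      exact hab (by rw [e1, e3]; exact add_le_add_right h m₁₁)
    have hle' : ¬ m₂₁ ≤ m₁₂ := by
      intro h
      exact hba (by rw [e1, e3]; exact add_le_add_right h m₁₁)
    refine ⟨h12.lt_of_ne ?_, h21.lt_of_ne ?_, hle, hle'⟩
    · rintro rfl; exact hle h21
    · rintro rfl; exact hle' h12
  obtain ⟨c₁₁, c₁₂, c₂₁, c₂₂, h11, h12, h21, h22, e1, e2, e3, e4⟩ :=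
    hA a₁ a₂ b₁ b₂ ha₁ ha₂ hb₁ hb₂ heq
  obtain ⟨p1, p2, p3, p4⟩ := key c₁₁ c₁₂ c₂₁ c₂₂ h11 h12 h21 h22 e1 e2 e3 e4
  refine ⟨⟨c₁₁, c₁₂, c₂₁, c₂₂, h11, h12, h21, h22, e1, e2, e3, e4, p1, p2, p3, p4⟩, ?_⟩
  intro m₁₁ m₁₂ m₂₁ m₂₂ h11 h12 h21 h22 e1 e2 e3 e4
  obtain ⟨q1, q2, _, _⟩ := key m₁₁ m₁₂ m₂₁ m₂₂ h11 h12 h21 h22 e1 e2 e3 e4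
  exact ⟨q1, q2⟩
end

section
/- Let A be an antilattice po-group and G a directed po-group. Then the lexicographic product A ×⃗ G satisfies RDP if and only if both A and G satisfy RDP. -/
section Aux

variable {A : Type*} [AddGroup A] [PartialOrder A]
    [CovariantClass A A (· + ·) (· ≤ ·)]
    [CovariantClass A A (Function.swap (· + ·)) (· ≤ ·)]

/-- A special instance of Riesz interpolation derived from RDP:
if `0, t ≤ x, y` then there is `z` with `0, t ≤ z ≤ x, y`. -/
theorem RDP.interp (hA : RDP A) {x y t : A} (hx : 0 ≤ x) (hy : 0 ≤ y)
    (htx : t ≤ x) (hty : t ≤ y) : ∃ z, 0 ≤ z ∧ t ≤ z ∧ z ≤ x ∧ z ≤ y := by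
  have h1 : 0 ≤ x + -t := by
    have := add_le_add_right htx (-t); simpa using this
  have h2 : 0 ≤ -t + y := by
    have := add_le_add_left hty (-t); simpa using this
  obtain ⟨c₁₁, c₁₂, c₂₁, c₂₂, p11, p12, p21, p22, e1, e2, e3, e4⟩ :=
    hA (x + -t) y x (-t + y) h1 hy hx h2 (by rw [add_assoc])
  refine ⟨c₂₁, p21, ?_, ?_, ?_⟩
  · have hx2 : x = c₁₁ + (c₁₂ + t) := by
      rw [← add_assoc, ← e1, neg_add_cancel_right]
    have h5 : c₁₁ + c₂₁ = c₁₁ + (c₁₂ + t) := by rw [← e3, hx2]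
    have h6 : c₂₁ = c₁₂ + t := add_left_cancel h5
    rw [h6]
    calc t = 0 + t := (zero_add t).symm
      _ ≤ c₁₂ + t := add_le_add_left p12 t
  · calc c₂₁ = 0 + c₂₁ := (zero_add _).symm
      _ ≤ c₁₁ + c₂₁ := add_le_add_left p11 _
      _ = x := e3.symm
  · calc c₂₁ = c₂₁ + 0 := (add_zero _).symm
      _ ≤ c₂₁ + c₂₂ := add_le_add_right p22 _
      _ = y := e2.symm

/-- In an antilattice po-group with RDP, two incomparable nonnegative elements have a
strictly positive common lower bound. -/
theorem exists_pos_lb (hanti : IsAntilattice A) (hA : RDP A) {x y : A}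
    (hx : 0 ≤ x) (hy : 0 ≤ y) (hxy : ¬ x ≤ y) (hyx : ¬ y ≤ x) :
    ∃ z, 0 < z ∧ z ≤ x ∧ z ≤ y := by
  have hex : ∃ t, t ≤ x ∧ t ≤ y ∧ ¬ t ≤ 0 := by
    by_contra h
    push_neg at h
    have hglb : IsGLB {x, y} 0 := by
      constructor
      · intro b hb
        rcases hb with rfl | hb
        · exact hx
        · rw [Set.mem_singleton_iff] at hb; subst hb; exact hy
      · intro t ht
        exact h t (ht (by simp)) (ht (by simp))
    rcases hanti x y (Or.inr ⟨0, hglb⟩) with h' | h'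
    · exact hxy h'
    · exact hyx h'
  obtain ⟨t, htx, hty, ht0⟩ := hex
  obtain ⟨z, hz0, htz, hzx, hzy⟩ := hA.interp hx hy htx hty
  refine ⟨z, lt_of_le_of_ne hz0 ?_, hzx, hzy⟩
  rintro rfl
  exact ht0 htz

/-- In an antilattice po-group with RDP, a positive equation whose "rows" and "columns"
are both incomparable admits a decomposition with strictly positive corners. -/
theorem corner_decomp (hanti : IsAntilattice A) (hA : RDP A) {a₁ a₂ b₁ b₂ : A}
    (ha₁ : 0 ≤ a₁) (ha₂ : 0 ≤ a₂) (hb₁ : 0 ≤ b₁) (hb₂ : 0 ≤ b₂)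
    (hsum : a₁ + a₂ = b₁ + b₂)
    (h1 : ¬ a₁ ≤ b₁) (h1' : ¬ b₁ ≤ a₁) (h2 : ¬ a₂ ≤ b₂) (h2' : ¬ b₂ ≤ a₂) :
    ∃ c₁₁ c₁₂ c₂₁ c₂₂ : A, 0 < c₁₁ ∧ 0 ≤ c₁₂ ∧ 0 ≤ c₂₁ ∧ 0 < c₂₂ ∧
      a₁ = c₁₁ + c₁₂ ∧ a₂ = c₂₁ + c₂₂ ∧ b₁ = c₁₁ + c₂₁ ∧ b₂ = c₁₂ + c₂₂ := by
  obtain ⟨z, hz, hza, hzb⟩ := exists_pos_lb hanti hA ha₁ hb₁ h1 h1'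
  obtain ⟨s, hs, hsa, hsb⟩ := exists_pos_lb hanti hA ha₂ hb₂ h2 h2'
  have k1 : 0 ≤ -z + a₁ := by
    have := add_le_add_left hza (-z); simpa using this
  have k2 : 0 ≤ -z + b₁ := by
    have := add_le_add_left hzb (-z); simpa using this
  have k3 : 0 ≤ a₂ + -s := by
    have := add_le_add_right hsa (-s); simpa using this
  have k4 : 0 ≤ b₂ + -s := by
    have := add_le_add_right hsb (-s); simpa using this
  have heq : (-z + a₁) + (a₂ + -s) = (-z + b₁) + (b₂ + -s) := by
    calc (-z + a₁) + (a₂ + -s) = -z + ((a₁ + a₂) + -s) := by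
          simp only [add_assoc]
      _ = -z + ((b₁ + b₂) + -s) := by rw [hsum]
      _ = (-z + b₁) + (b₂ + -s) := by simp only [add_assoc]
  obtain ⟨c₁₁, c₁₂, c₂₁, c₂₂, p11, p12, p21, p22, e1, e2, e3, e4⟩ :=
    hA _ _ _ _ k1 k3 k2 k4 heq
  refine ⟨z + c₁₁, c₁₂, c₂₁, c₂₂ + s, ?_, p12, p21, ?_, ?_, ?_, ?_, ?_⟩
  · calc (0:A) < z := hz
      _ = z + 0 := (add_zero z).symm
      _ ≤ z + c₁₁ := add_le_add_right p11 z
  · calc (0:A) < s := hs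
      _ = 0 + s := (zero_add s).symm
      _ ≤ c₂₂ + s := add_le_add_left p22 s
  · rw [add_assoc, ← e1, add_neg_cancel_left]
  · rw [← add_assoc, ← e2, neg_add_cancel_right]
  · rw [add_assoc, ← e3, add_neg_cancel_left]
  · rw [← add_assoc, ← e4, neg_add_cancel_right]

theorem aux_add_lt_add_left (c : A) {u v : A} (h : u < v) : c + u < c + v := by
  refine lt_of_le_of_ne (add_le_add_right h.le c) ?_
  intro he
  exact h.ne (add_left_cancel he)

theorem aux_add_lt_add_right (c : A) {u v : A} (h : u < v) : u + c < v + c := by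
  refine lt_of_le_of_ne (add_le_add_left h.le c) ?_
  intro he
  exact h.ne (add_right_cancel he)

/-- Solving the G-side system with shifts absorbed in the two diagonal corners. -/
theorem shift_solve {G : Type*} [AddGroup G] [PartialOrder G]
    [CovariantClass G G (· + ·) (· ≤ ·)]
    [CovariantClass G G (Function.swap (· + ·)) (· ≤ ·)]
    (hG : RDP G) (g₁ g₂ h₁ h₂ k m : G) (hsum : g₁ + g₂ = h₁ + h₂)
    (hk1 : 0 ≤ k + g₁) (hk2 : 0 ≤ k + h₁) (hm1 : 0 ≤ g₂ + m) (hm2 : 0 ≤ h₂ + m) :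
    ∃ d₁₁ d₁₂ d₂₁ d₂₂ : G, 0 ≤ k + d₁₁ ∧ 0 ≤ d₁₂ ∧ 0 ≤ d₂₁ ∧ 0 ≤ d₂₂ + m ∧
      g₁ = d₁₁ + d₁₂ ∧ g₂ = d₂₁ + d₂₂ ∧ h₁ = d₁₁ + d₂₁ ∧ h₂ = d₁₂ + d₂₂ := by
  have heq : (k + g₁) + (g₂ + m) = (k + h₁) + (h₂ + m) := by
    calc (k + g₁) + (g₂ + m) = k + ((g₁ + g₂) + m) := by simp only [add_assoc]
      _ = k + ((h₁ + h₂) + m) := by rw [hsum]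
      _ = (k + h₁) + (h₂ + m) := by simp only [add_assoc]
  obtain ⟨e₁₁, e₁₂, e₂₁, e₂₂, p11, p12, p21, p22, e1, e2, e3, e4⟩ :=
    hG (k + g₁) (g₂ + m) (k + h₁) (h₂ + m) hk1 hm1 hk2 hm2 heq
  refine ⟨-k + e₁₁, e₁₂, e₂₁, e₂₂ + -m, ?_, p12, p21, ?_, ?_, ?_, ?_, ?_⟩
  · rw [add_neg_cancel_left]; exact p11
  · rw [neg_add_cancel_right]; exact p22
  · rw [add_assoc, ← e1, neg_add_cancel_left]
  · rw [← add_assoc, ← e2, add_neg_cancel_right]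
  · rw [add_assoc, ← e3, neg_add_cancel_left]
  · rw [← add_assoc, ← e4, add_neg_cancel_right]

end Aux

/-- If `A` is an antilattice po-group and `G` is a directed po-group, then
the lexicographic product `A ×ₗ G` satisfies RDP iff both `A` and `G` satisfy RDP. -/
theorem rdp_lex_iff_antilattice {A G : Type*}
    [AddGroup A] [PartialOrder A]
    [CovariantClass A A (· + ·) (· ≤ ·)]
    [CovariantClass A A (Function.swap (· + ·)) (· ≤ ·)]
    [AddGroup G] [PartialOrder G]
    [CovariantClass G G (· + ·) (· ≤ ·)]
    [CovariantClass G G (Function.swap (· + ·)) (· ≤ ·)]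
    (hanti : IsAntilattice A)
    (hdir : ∀ x y : G, ∃ z : G, x ≤ z ∧ y ≤ z) :
    RDP (A ×ₗ G) ↔ RDP A ∧ RDP G := by
  constructor
  · intro hlex
    constructor
    · -- RDP A
      intro a₁ a₂ b₁ b₂ ha₁ ha₂ hb₁ hb₂ hsum
      have pos : ∀ a : A, 0 ≤ a → (0 : A ×ₗ G) ≤ toLex (a, (0:G)) := by
        intro a ha
        rcases ha.lt_or_eq with h | h
        · exact (Prod.Lex.toLex_le_toLex (x := (0,0)) (y := (a,0))).mpr (Or.inl h)
        · exact (Prod.Lex.toLex_le_toLex (x := (0,0)) (y := (a,0))).mpr (Or.inr ⟨h, le_refl _⟩)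
      obtain ⟨C₁₁, C₁₂, C₂₁, C₂₂, q11, q12, q21, q22, E1, E2, E3, E4⟩ :=
        hlex (toLex (a₁, (0:G))) (toLex (a₂, 0)) (toLex (b₁, 0)) (toLex (b₂, 0))
          (pos _ ha₁) (pos _ ha₂) (pos _ hb₁) (pos _ hb₂)
          (by
            show toLex (a₁ + a₂, (0:G) + 0) = toLex (b₁ + b₂, (0:G) + 0)
            rw [hsum])
      have fst_nonneg : ∀ P : A ×ₗ G, 0 ≤ P → 0 ≤ (ofLex P).1 := by
        intro P hP
        rcases (Prod.Lex.toLex_le_toLex (x := (0,0)) (y := (ofLex P))).mp hP with h | h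
        · exact le_of_lt h
        · exact le_of_eq h.1
      refine ⟨(ofLex C₁₁).1, (ofLex C₁₂).1, (ofLex C₂₁).1, (ofLex C₂₂).1,
        fst_nonneg _ q11, fst_nonneg _ q12, fst_nonneg _ q21, fst_nonneg _ q22,
        ?_, ?_, ?_, ?_⟩
      · exact congrArg (fun P : A ×ₗ G => (ofLex P).1) E1
      · exact congrArg (fun P : A ×ₗ G => (ofLex P).1) E2
      · exact congrArg (fun P : A ×ₗ G => (ofLex P).1) E3
      · exact congrArg (fun P : A ×ₗ G => (ofLex P).1) E4
    · -- RDP G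
      intro g₁ g₂ h₁ h₂ hg₁ hg₂ hh₁ hh₂ hsum
      have pos : ∀ g : G, 0 ≤ g → (0 : A ×ₗ G) ≤ toLex ((0:A), g) := by
        intro g hg
        exact (Prod.Lex.toLex_le_toLex (x := (0,0)) (y := (0,g))).mpr (Or.inr ⟨rfl, hg⟩)
      obtain ⟨C₁₁, C₁₂, C₂₁, C₂₂, q11, q12, q21, q22, E1, E2, E3, E4⟩ :=
        hlex (toLex ((0:A), g₁)) (toLex (0, g₂)) (toLex (0, h₁)) (toLex (0, h₂))
          (pos _ hg₁) (pos _ hg₂) (pos _ hh₁) (pos _ hh₂)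
          (by
            show toLex ((0:A) + 0, g₁ + g₂) = toLex ((0:A) + 0, h₁ + h₂)
            rw [hsum])
      have fst_nonneg : ∀ P : A ×ₗ G, 0 ≤ P → 0 ≤ (ofLex P).1 := by
        intro P hP
        rcases (Prod.Lex.toLex_le_toLex (x := (0,0)) (y := (ofLex P))).mp hP with h | h
        · exact le_of_lt h
        · exact le_of_eq h.1
      -- first components of the decomposition are all zero
      have F1 : (ofLex C₁₁).1 + (ofLex C₁₂).1 = 0 :=
        (congrArg (fun P : A ×ₗ G => (ofLex P).1) E1).symm
      have F2 : (ofLex C₂₁).1 + (ofLex C₂₂).1 = 0 :=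
        (congrArg (fun P : A ×ₗ G => (ofLex P).1) E2).symm
      have zero_of : ∀ u v : A, 0 ≤ u → 0 ≤ v → u + v = 0 → u = 0 ∧ v = 0 := by
        intro u v hu hv huv
        have h1 : u ≤ 0 := by
          calc u = u + 0 := (add_zero u).symm
            _ ≤ u + v := add_le_add_right hv u
            _ = 0 := huv
        have hu0 : u = 0 := le_antisymm h1 hu
        refine ⟨hu0, ?_⟩
        rw [hu0, zero_add] at huv
        exact huv
      obtain ⟨z11, z12⟩ := zero_of _ _ (fst_nonneg _ q11) (fst_nonneg _ q12) F1
      obtain ⟨z21, z22⟩ := zero_of _ _ (fst_nonneg _ q21) (fst_nonneg _ q22) F2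
      have snd_nonneg : ∀ P : A ×ₗ G, 0 ≤ P → (ofLex P).1 = 0 → 0 ≤ (ofLex P).2 := by
        intro P hP hP1
        rcases (Prod.Lex.toLex_le_toLex (x := (0,0)) (y := (ofLex P))).mp hP with h | h
        · rw [hP1] at h; exact absurd h (lt_irrefl 0)
        · exact h.2
      refine ⟨(ofLex C₁₁).2, (ofLex C₁₂).2, (ofLex C₂₁).2, (ofLex C₂₂).2,
        snd_nonneg _ q11 z11, snd_nonneg _ q12 z12, snd_nonneg _ q21 z21,
        snd_nonneg _ q22 z22, ?_, ?_, ?_, ?_⟩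
      · exact congrArg (fun P : A ×ₗ G => (ofLex P).2) E1
      · exact congrArg (fun P : A ×ₗ G => (ofLex P).2) E2
      · exact congrArg (fun P : A ×ₗ G => (ofLex P).2) E3
      · exact congrArg (fun P : A ×ₗ G => (ofLex P).2) E4
  · rintro ⟨hA, hG⟩
    intro P₁ P₂ Q₁ Q₂ hP₁ hP₂ hQ₁ hQ₂ hsum
    obtain ⟨a₁, g₁⟩ := P₁
    obtain ⟨a₂, g₂⟩ := P₂
    obtain ⟨b₁, h₁⟩ := Q₁
    obtain ⟨b₂, h₂⟩ := Q₂
    have hsum_fst : a₁ + a₂ = b₁ + b₂ :=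
      congrArg (fun P : A ×ₗ G => (ofLex P).1) hsum
    have hsum_snd : g₁ + g₂ = h₁ + h₂ :=
      congrArg (fun P : A ×ₗ G => (ofLex P).2) hsum
    have hsum' : toLex (a₁, g₁) + toLex (a₂, g₂) = toLex (b₁, h₁) + toLex (b₂, h₂) :=
      hsum
    have hP₁' := (Prod.Lex.toLex_le_toLex (x := (0,0)) (y := (a₁,g₁))).mp hP₁
    have hP₂' := (Prod.Lex.toLex_le_toLex (x := (0,0)) (y := (a₂,g₂))).mp hP₂
    have hQ₁' := (Prod.Lex.toLex_le_toLex (x := (0,0)) (y := (b₁,h₁))).mp hQ₁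
    have hQ₂' := (Prod.Lex.toLex_le_toLex (x := (0,0)) (y := (b₂,h₂))).mp hQ₂
    have ha₁ : 0 ≤ a₁ := by
      rcases hP₁' with h | h
      exacts [h.le, h.1.le]
    have ha₂ : 0 ≤ a₂ := by
      rcases hP₂' with h | h
      exacts [h.le, h.1.le]
    have hb₁ : 0 ≤ b₁ := by
      rcases hQ₁' with h | h
      exacts [h.le, h.1.le]
    have hb₂ : 0 ≤ b₂ := by
      rcases hQ₂' with h | h
      exacts [h.le, h.1.le]
    by_cases hab : a₁ ≤ b₁
    · by_cases hba : b₁ ≤ a₁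
      · -- a₁ = b₁ : diagonal case, use RDP G with shifts
        have heq1 : a₁ = b₁ := le_antisymm hab hba
        have heq2 : a₂ = b₂ := by
          apply add_left_cancel (a := a₁)
          rw [hsum_fst, heq1]
        obtain ⟨k, hk1, hk2, hk0⟩ :
            ∃ k : G, 0 ≤ k + g₁ ∧ 0 ≤ k + h₁ ∧ (a₁ = 0 → k = 0) := by
          by_cases ha : a₁ = 0
          · have hg1 : 0 ≤ g₁ := by
              rcases hP₁' with h | h
              · rw [ha] at h; exact absurd h (lt_irrefl 0)
              · exact h.2
            have hh1 : 0 ≤ h₁ := by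
              rcases hQ₁' with h | h
              · rw [← heq1, ha] at h; exact absurd h (lt_irrefl 0)
              · exact h.2
            exact ⟨0, by simpa using hg1, by simpa using hh1, fun _ => rfl⟩
          · obtain ⟨k, hk1', hk2'⟩ := hdir (-g₁) (-h₁)
            refine ⟨k, ?_, ?_, fun h => absurd h ha⟩
            · have := add_le_add_left hk1' g₁; simpa using this
            · have := add_le_add_left hk2' h₁; simpa using this
        obtain ⟨m, hm1, hm2, hm0⟩ :
            ∃ m : G, 0 ≤ g₂ + m ∧ 0 ≤ h₂ + m ∧ (a₂ = 0 → m = 0) := by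
          by_cases ha : a₂ = 0
          · have hg2 : 0 ≤ g₂ := by
              rcases hP₂' with h | h
              · rw [ha] at h; exact absurd h (lt_irrefl 0)
              · exact h.2
            have hh2 : 0 ≤ h₂ := by
              rcases hQ₂' with h | h
              · rw [← heq2, ha] at h; exact absurd h (lt_irrefl 0)
              · exact h.2
            exact ⟨0, by simpa using hg2, by simpa using hh2, fun _ => rfl⟩
          · obtain ⟨m, hm1', hm2'⟩ := hdir (-g₂) (-h₂)
            refine ⟨m, ?_, ?_, fun h => absurd h ha⟩
            · have := add_le_add_right hm1' g₂; simpa using this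
            · have := add_le_add_right hm2' h₂; simpa using this
        obtain ⟨d₁₁, d₁₂, d₂₁, d₂₂, r11, r12, r21, r22, f1, f2, f3, f4⟩ :=
          shift_solve hG g₁ g₂ h₁ h₂ k m hsum_snd hk1 hk2 hm1 hm2
        refine ⟨toLex (a₁, d₁₁), toLex (0, d₁₂), toLex (0, d₂₁), toLex (a₂, d₂₂),
          ?_, ?_, ?_, ?_, ?_, ?_, ?_, ?_⟩
        · by_cases ha : a₁ = 0
          · refine (Prod.Lex.toLex_le_toLex (x := (0,0)) (y := (a₁, d₁₁))).mpr (Or.inr ⟨ha.symm, ?_⟩)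
            have := hk0 ha
            rw [this, zero_add] at r11
            exact r11
          · exact (Prod.Lex.toLex_le_toLex (x := (0,0)) (y := (a₁, d₁₁))).mpr
              (Or.inl (lt_of_le_of_ne ha₁ (Ne.symm ha)))
        · exact (Prod.Lex.toLex_le_toLex (x := (0,0)) (y := (0, d₁₂))).mpr (Or.inr ⟨rfl, r12⟩)
        · exact (Prod.Lex.toLex_le_toLex (x := (0,0)) (y := (0, d₂₁))).mpr (Or.inr ⟨rfl, r21⟩)
        · by_cases ha : a₂ = 0
          · refine (Prod.Lex.toLex_le_toLex (x := (0,0)) (y := (a₂, d₂₂))).mpr (Or.inr ⟨ha.symm, ?_⟩)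
            have := hm0 ha
            rw [this, add_zero] at r22
            exact r22
          · exact (Prod.Lex.toLex_le_toLex (x := (0,0)) (y := (a₂, d₂₂))).mpr
              (Or.inl (lt_of_le_of_ne ha₂ (Ne.symm ha)))
        · show toLex (a₁, g₁) = toLex (a₁ + 0, d₁₁ + d₁₂)
          rw [add_zero, ← f1]
        · show toLex (a₂, g₂) = toLex (0 + a₂, d₂₁ + d₂₂)
          rw [zero_add, ← f2]
        · show toLex (b₁, h₁) = toLex (a₁ + 0, d₁₁ + d₂₁)
          rw [add_zero, ← f3, heq1]
        · show toLex (b₂, h₂) = toLex (0 + a₂, d₁₂ + d₂₂)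
          rw [zero_add, ← f4, heq2]
      · -- a₁ < b₁
        have hlt : a₁ < b₁ := lt_of_le_of_ne hab (fun h => hba h.symm.le)
        refine ⟨toLex (a₁, g₁), 0, -toLex (a₁, g₁) + toLex (b₁, h₁), toLex (b₂, h₂),
          hP₁, le_refl 0, ?_, hQ₂, (add_zero _).symm, ?_,
          (add_neg_cancel_left _ _).symm, (zero_add _).symm⟩
        · refine (Prod.Lex.toLex_le_toLex (x := (0,0)) (y := (-a₁ + b₁, -g₁ + h₁))).mpr (Or.inl ?_)
          have := aux_add_lt_add_left (-a₁) hlt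
          simpa using this
        · have : (-toLex (a₁, g₁) + toLex (b₁, h₁)) + toLex (b₂, h₂)
              = toLex (a₂, g₂) := by
            rw [add_assoc, ← hsum', neg_add_cancel_left]
          exact this.symm
    · by_cases hba : b₁ ≤ a₁
      · -- b₁ < a₁
        have hlt : b₁ < a₁ := lt_of_le_of_ne hba (fun h => hab h.symm.le)
        refine ⟨toLex (b₁, h₁), -toLex (b₁, h₁) + toLex (a₁, g₁), 0, toLex (a₂, g₂),
          hQ₁, ?_, le_refl 0, hP₂, (add_neg_cancel_left _ _).symm,
          (zero_add _).symm, (add_zero _).symm, ?_⟩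
        · refine (Prod.Lex.toLex_le_toLex (x := (0,0)) (y := (-b₁ + a₁, -h₁ + g₁))).mpr (Or.inl ?_)
          have := aux_add_lt_add_left (-b₁) hlt
          simpa using this
        · have : (-toLex (b₁, h₁) + toLex (a₁, g₁)) + toLex (a₂, g₂)
              = toLex (b₂, h₂) := by
            rw [add_assoc, hsum', neg_add_cancel_left]
          exact this.symm
      · -- a₁, b₁ incomparable; compare a₂, b₂
        by_cases hab2 : a₂ ≤ b₂
        · by_cases hba2 : b₂ ≤ a₂
          · exfalso
            have heq2 : a₂ = b₂ := le_antisymm hab2 hba2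
            have : a₁ = b₁ := by
              apply add_right_cancel (b := a₂)
              rw [hsum_fst, heq2]
            exact hab this.le
          · -- a₂ < b₂
            have hlt : a₂ < b₂ := lt_of_le_of_ne hab2 (fun h => hba2 h.symm.le)
            refine ⟨toLex (b₁, h₁), toLex (b₂, h₂) + -toLex (a₂, g₂), 0, toLex (a₂, g₂),
              hQ₁, ?_, le_refl 0, hP₂, ?_, (zero_add _).symm, (add_zero _).symm,
              (neg_add_cancel_right _ _).symm⟩
            · refine (Prod.Lex.toLex_le_toLex (x := (0,0)) (y := (b₂ + -a₂, h₂ + -g₂))).mpr (Or.inl ?_)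
              have := aux_add_lt_add_right (-a₂) hlt
              simpa using this
            · have : toLex (b₁, h₁) + (toLex (b₂, h₂) + -toLex (a₂, g₂))
                  = toLex (a₁, g₁) := by
                rw [← add_assoc, ← hsum', add_neg_cancel_right]
              exact this.symm
        · by_cases hba2 : b₂ ≤ a₂
          · -- b₂ < a₂
            have hlt : b₂ < a₂ := lt_of_le_of_ne hba2 (fun h => hab2 h.symm.le)
            refine ⟨toLex (a₁, g₁), 0, toLex (a₂, g₂) + -toLex (b₂, h₂), toLex (b₂, h₂),
              hP₁, le_refl 0, ?_, hQ₂, (add_zero _).symm,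
              (neg_add_cancel_right _ _).symm, ?_, (zero_add _).symm⟩
            · refine (Prod.Lex.toLex_le_toLex (x := (0,0)) (y := (a₂ + -b₂, g₂ + -h₂))).mpr (Or.inl ?_)
              have := aux_add_lt_add_right (-b₂) hlt
              simpa using this
            · have : toLex (a₁, g₁) + (toLex (a₂, g₂) + -toLex (b₂, h₂))
                  = toLex (b₁, h₁) := by
                rw [← add_assoc, hsum', add_neg_cancel_right]
              exact this.symm
          · -- both pairs incomparable: hard core
            obtain ⟨c₁₁, c₁₂, c₂₁, c₂₂, p11, p12, p21, p22, e1, e2, e3, e4⟩ :=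
              corner_decomp hanti hA ha₁ ha₂ hb₁ hb₂ hsum_fst hab hba hab2 hba2
            obtain ⟨k, hk1', hk2'⟩ := hdir (-g₁) (-h₁)
            obtain ⟨m, hm1', hm2'⟩ := hdir (-g₂) (-h₂)
            have hk1 : 0 ≤ k + g₁ := by
              have := add_le_add_left hk1' g₁; simpa using this
            have hk2 : 0 ≤ k + h₁ := by
              have := add_le_add_left hk2' h₁; simpa using this
            have hm1 : 0 ≤ g₂ + m := by
              have := add_le_add_right hm1' g₂; simpa using this
            have hm2 : 0 ≤ h₂ + m := by
              have := add_le_add_right hm2' h₂; simpa using this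
            obtain ⟨d₁₁, d₁₂, d₂₁, d₂₂, r11, r12, r21, r22, f1, f2, f3, f4⟩ :=
              shift_solve hG g₁ g₂ h₁ h₂ k m hsum_snd hk1 hk2 hm1 hm2
            have pos_cell : ∀ (c : A) (d : G), 0 ≤ c → (0 < c ∨ 0 ≤ d) →
                (0 : A ×ₗ G) ≤ toLex (c, d) := by
              intro c d hc h
              rcases h with h | h
              · exact (Prod.Lex.toLex_le_toLex (x := (0,0)) (y := (c,d))).mpr (Or.inl h)
              · rcases hc.lt_or_eq with h' | h'
                · exact (Prod.Lex.toLex_le_toLex (x := (0,0)) (y := (c,d))).mpr (Or.inl h')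
                · exact (Prod.Lex.toLex_le_toLex (x := (0,0)) (y := (c,d))).mpr (Or.inr ⟨h', h⟩)
            refine ⟨toLex (c₁₁, d₁₁), toLex (c₁₂, d₁₂), toLex (c₂₁, d₂₁),
              toLex (c₂₂, d₂₂), ?_, ?_, ?_, ?_, ?_, ?_, ?_, ?_⟩
            · exact (Prod.Lex.toLex_le_toLex (x := (0,0)) (y := (c₁₁, d₁₁))).mpr (Or.inl p11)
            · exact pos_cell _ _ p12 (Or.inr r12)
            · exact pos_cell _ _ p21 (Or.inr r21)
            · exact (Prod.Lex.toLex_le_toLex (x := (0,0)) (y := (c₂₂, d₂₂))).mpr (Or.inl p22)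
            · show toLex (a₁, g₁) = toLex (c₁₁ + c₁₂, d₁₁ + d₁₂)
              rw [← e1, ← f1]
            · show toLex (a₂, g₂) = toLex (c₂₁ + c₂₂, d₂₁ + d₂₂)
              rw [← e2, ← f2]
            · show toLex (b₁, h₁) = toLex (c₁₁ + c₂₁, d₁₁ + d₂₁)
              rw [← e3, ← f3]
            · show toLex (b₂, h₂) = toLex (c₁₂ + c₂₂, d₁₂ + d₂₂)
              rw [← e4, ← f4]
end

section
/- Let {Aᵢ : i ∈ I} be a family of non-trivial Abelian linearly ordered groups such that for each i ∈ I and each a ∈ Aᵢ with a > 0 there exists a₀ ∈ Aᵢ with 0 < a₀ < a. Let A = ∏_{i∈I} Aᵢ be endowed with the strict product ordering, and let G be a directed po-group with RDP. Then the lexicographic product A ×⃗ G satisfies RDP. -/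
/-- The direct product `∏ i, A i` regarded with the strict product ordering. -/
def StrictPi {I : Type*} (A : I → Type*) : Type _ := ∀ i, A i

instance {I : Type*} (A : I → Type*) [∀ i, AddCommGroup (A i)] :
    AddCommGroup (StrictPi A) :=
  inferInstanceAs (AddCommGroup (∀ i, A i))

/-- The strict product ordering: `(aⁱ) ≦ (bⁱ)` iff `aⁱ = bⁱ` for all `i`, or
`aⁱ < bⁱ` for all `i`. -/
instance {I : Type*} (A : I → Type*) [∀ i, PartialOrder (A i)] :
    PartialOrder (StrictPi A) where
  le x y := x = y ∨ ∀ i, x i < y i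
  le_refl x := Or.inl rfl
  le_trans x y z hxy hyz := by
    rcases hxy with rfl | hxy
    · exact hyz
    · rcases hyz with rfl | hyz
      · exact Or.inr hxy
      · exact Or.inr fun i => lt_trans (hxy i) (hyz i)
  le_antisymm x y hxy hyx := by
    rcases hxy with rfl | hxy
    · rfl
    · rcases hyx with rfl | hyx
      · rfl
      · exact funext fun i => absurd (hyx i) (lt_asymm (hxy i))

set_option linter.unusedSectionVars false

section Aux

variable {I : Type*} {A : I → Type*}

/-- Riesz decomposition with strictly positive parts in a dense linearly ordered group. -/
private lemma linDecomp {α : Type*} [AddCommGroup α] [LinearOrder α] [IsOrderedAddMonoid α]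
    (hd : ∀ a : α, 0 < a → ∃ b, 0 < b ∧ b < a)
    {a₁ a₂ b₁ b₂ : α} (ha₁ : 0 < a₁) (ha₂ : 0 < a₂) (hb₁ : 0 < b₁) (hb₂ : 0 < b₂)
    (h : a₁ + a₂ = b₁ + b₂) :
    ∃ c₁₁ c₁₂ c₂₁ c₂₂ : α, 0 < c₁₁ ∧ 0 < c₁₂ ∧ 0 < c₂₁ ∧ 0 < c₂₂ ∧
      a₁ = c₁₁ + c₁₂ ∧ a₂ = c₂₁ + c₂₂ ∧ b₁ = c₁₁ + c₂₁ ∧ b₂ = c₁₂ + c₂₂ := by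
  rcases le_total a₁ b₁ with hle | hle
  · obtain ⟨ε, hε0, hεlt⟩ := hd (min a₁ b₂) (lt_min ha₁ hb₂)
    have ha2 : a₂ = b₁ + b₂ - a₁ := by rw [← h]; abel
    refine ⟨a₁ - ε, ε, b₁ - a₁ + ε, b₂ - ε,
      sub_pos.2 (hεlt.trans_le (min_le_left _ _)), hε0,
      add_pos_of_nonneg_of_pos (sub_nonneg.2 hle) hε0,
      sub_pos.2 (hεlt.trans_le (min_le_right _ _)), by abel, ?_, by abel, by abel⟩
    rw [ha2]; abel
  · obtain ⟨ε, hε0, hεlt⟩ := hd (min b₁ a₂) (lt_min hb₁ ha₂)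
    have hb2 : b₂ = a₁ + a₂ - b₁ := by rw [h]; abel
    refine ⟨b₁ - ε, a₁ - b₁ + ε, ε, a₂ - ε,
      sub_pos.2 (hεlt.trans_le (min_le_left _ _)),
      add_pos_of_nonneg_of_pos (sub_nonneg.2 hle) hε0, hε0,
      sub_pos.2 (hεlt.trans_le (min_le_right _ _)), by abel, by abel, by abel, ?_⟩
    rw [hb2]; abel

private lemma piDecomp [∀ i, AddCommGroup (A i)] [∀ i, LinearOrder (A i)] [∀ i, IsOrderedAddMonoid (A i)]
    (hdense : ∀ i, ∀ a : A i, 0 < a → ∃ a₀ : A i, 0 < a₀ ∧ a₀ < a)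
    {α₁ α₂ β₁ β₂ : StrictPi A}
    (h1 : ∀ i, 0 < α₁ i) (h2 : ∀ i, 0 < α₂ i) (h3 : ∀ i, 0 < β₁ i) (h4 : ∀ i, 0 < β₂ i)
    (h : α₁ + α₂ = β₁ + β₂) :
    ∃ γ₁₁ γ₁₂ γ₂₁ γ₂₂ : StrictPi A,
      (∀ i, 0 < γ₁₁ i) ∧ (∀ i, 0 < γ₁₂ i) ∧ (∀ i, 0 < γ₂₁ i) ∧ (∀ i, 0 < γ₂₂ i) ∧
      α₁ = γ₁₁ + γ₁₂ ∧ α₂ = γ₂₁ + γ₂₂ ∧ β₁ = γ₁₁ + γ₂₁ ∧ β₂ = γ₁₂ + γ₂₂ := by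
  have hi : ∀ i, α₁ i + α₂ i = β₁ i + β₂ i := fun i => congrFun h i
  choose c₁₁ c₁₂ c₂₁ c₂₂ p₁₁ p₁₂ p₂₁ p₂₂ e₁ e₂ e₃ e₄ using
    fun i => linDecomp (hdense i) (h1 i) (h2 i) (h3 i) (h4 i) (hi i)
  exact ⟨c₁₁, c₁₂, c₂₁, c₂₂, p₁₁, p₁₂, p₂₁, p₂₂,
    funext e₁, funext e₂, funext e₃, funext e₄⟩

variable {G : Type*} [AddGroup G] [PartialOrder G]
    [CovariantClass G G (· + ·) (· ≤ ·)]
    [CovariantClass G G (Function.swap (· + ·)) (· ≤ ·)]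

private lemma trickRight (hdir : ∀ x y : G, ∃ z : G, x ≤ z ∧ y ≤ z) (hG : RDP G)
    {g₁ g₂ h₁ h₂ : G} (hg₁ : 0 ≤ g₁) (hh₁ : 0 ≤ h₁) (h : g₁ + g₂ = h₁ + h₂) :
    ∃ d₁₁ d₁₂ d₂₁ d₂₂ : G, 0 ≤ d₁₁ ∧ 0 ≤ d₁₂ ∧ 0 ≤ d₂₁ ∧
      g₁ = d₁₁ + d₁₂ ∧ g₂ = d₂₁ + d₂₂ ∧ h₁ = d₁₁ + d₂₁ ∧ h₂ = d₁₂ + d₂₂ := by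
  obtain ⟨z, hz1, hz2⟩ := hdir (-g₂) (-h₂)
  obtain ⟨e, he1, he0⟩ := hdir z 0
  have hg2 : 0 ≤ g₂ + e := by
    have := add_le_add_right (hz1.trans he1) g₂
    rwa [add_neg_cancel] at this
  have hh2 : 0 ≤ h₂ + e := by
    have := add_le_add_right (hz2.trans he1) h₂
    rwa [add_neg_cancel] at this
  obtain ⟨d₁₁, d₁₂, d₂₁, d₂₂, q₁₁, q₁₂, q₂₁, q₂₂, e₁, e₂, e₃, e₄⟩ :=
    hG g₁ (g₂ + e) h₁ (h₂ + e) hg₁ hg2 hh₁ hh2 (by rw [← add_assoc, ← add_assoc, h])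
  refine ⟨d₁₁, d₁₂, d₂₁, d₂₂ + -e, q₁₁, q₁₂, q₂₁, e₁, ?_, e₃, ?_⟩
  · rw [← add_assoc, ← e₂, add_assoc, add_neg_cancel, add_zero]
  · rw [← add_assoc, ← e₄, add_assoc, add_neg_cancel, add_zero]

private lemma trickLeft (hdir : ∀ x y : G, ∃ z : G, x ≤ z ∧ y ≤ z) (hG : RDP G)
    {g₁ g₂ h₁ h₂ : G} (hg₂ : 0 ≤ g₂) (hh₂ : 0 ≤ h₂) (h : g₁ + g₂ = h₁ + h₂) :
    ∃ d₁₁ d₁₂ d₂₁ d₂₂ : G, 0 ≤ d₁₂ ∧ 0 ≤ d₂₁ ∧ 0 ≤ d₂₂ ∧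
      g₁ = d₁₁ + d₁₂ ∧ g₂ = d₂₁ + d₂₂ ∧ h₁ = d₁₁ + d₂₁ ∧ h₂ = d₁₂ + d₂₂ := by
  obtain ⟨z, hz1, hz2⟩ := hdir (-g₁) (-h₁)
  obtain ⟨e, he1, he0⟩ := hdir z 0
  have hg1 : 0 ≤ e + g₁ := by
    have := add_le_add_left (hz1.trans he1) g₁
    rwa [neg_add_cancel] at this
  have hh1 : 0 ≤ e + h₁ := by
    have := add_le_add_left (hz2.trans he1) h₁
    rwa [neg_add_cancel] at this
  obtain ⟨d₁₁, d₁₂, d₂₁, d₂₂, q₁₁, q₁₂, q₂₁, q₂₂, e₁, e₂, e₃, e₄⟩ :=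
    hG (e + g₁) g₂ (e + h₁) h₂ hg1 hg₂ hh1 hh₂ (by rw [add_assoc, add_assoc, h])
  refine ⟨-e + d₁₁, d₁₂, d₂₁, d₂₂, q₁₂, q₂₁, q₂₂, ?_, e₂, ?_, e₄⟩
  · rw [add_assoc, ← e₁, neg_add_cancel_left]
  · rw [add_assoc, ← e₃, neg_add_cancel_left]

end Aux
section Lex

variable {I : Type*} {A : I → Type*} [∀ i, AddCommGroup (A i)] [∀ i, LinearOrder (A i)] [∀ i, IsOrderedAddMonoid (A i)]
  {G : Type*} [AddGroup G] [PartialOrder G]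

private lemma strictPi_zero_apply (i : I) : (0 : StrictPi A) i = 0 := rfl

private lemma lex_nonneg_elim {x : StrictPi A} {g : G}
    (h : (0 : StrictPi A ×ₗ G) ≤ toLex (x, g)) :
    (x = 0 ∧ 0 ≤ g) ∨ (x ≠ 0 ∧ ∀ i, (0 : A i) < x i) := by
  have h' : toLex ((0 : StrictPi A), (0 : G)) ≤ toLex (x, g) := h
  rcases Prod.Lex.le_iff.1 h' with hlt | ⟨heq, hg⟩
  · have hle : (0 : StrictPi A) = x ∨ ∀ i, (0 : StrictPi A) i < x i := hlt.le
    rcases hle with heq | hall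
    · exact absurd heq hlt.ne
    · exact Or.inr ⟨hlt.ne', fun i => hall i⟩
  · exact Or.inl ⟨heq.symm, hg⟩

private lemma lex_nonneg_of_pos {x : StrictPi A} (hne : x ≠ 0)
    (hp : ∀ i, (0 : A i) < x i) (g : G) : (0 : StrictPi A ×ₗ G) ≤ toLex (x, g) := by
  show toLex ((0 : StrictPi A), (0 : G)) ≤ toLex (x, g)
  refine Prod.Lex.le_iff.2 (Or.inl ?_)
  exact lt_of_le_of_ne (Or.inr fun i => hp i) (fun e => hne e.symm)

private lemma lex_nonneg_of_zero {g : G} (hg : 0 ≤ g) :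
    (0 : StrictPi A ×ₗ G) ≤ toLex ((0 : StrictPi A), g) := by
  show toLex ((0 : StrictPi A), (0 : G)) ≤ toLex (0, g)
  exact Prod.Lex.le_iff.2 (Or.inr ⟨rfl, hg⟩)

private lemma lex_eq_s7 {x y : StrictPi A} {g h : G} (h1 : x = y) (h2 : g = h) :
    toLex (x, g) = toLex (y, h) := by rw [h1, h2]

private lemma strictPi_ne_zero {x : StrictPi A} (i : I) (h : (0 : A i) < x i) :
    x ≠ 0 := fun e => absurd h (by rw [e]; exact lt_irrefl _)

private lemma nonempty_index {x : StrictPi A} (h : x ≠ 0) : Nonempty I := by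
  by_contra hc
  exact h (funext fun i => absurd (Nonempty.intro i) hc)

end Lex
private lemma lex_add {I : Type*} {A : I → Type*} [∀ i, AddCommGroup (A i)]
    [∀ i, PartialOrder (A i)] {G : Type*} [AddGroup G] [PartialOrder G]
    (x y : StrictPi A) (g h : G) :
    toLex (x, g) + toLex (y, h) = toLex (x + y, g + h) := rfl

private lemma coreLemma {I : Type*} {A : I → Type*}
    [∀ i, AddCommGroup (A i)] [∀ i, LinearOrder (A i)] [∀ i, IsOrderedAddMonoid (A i)]
    (hdense : ∀ i, ∀ a : A i, 0 < a → ∃ a₀ : A i, 0 < a₀ ∧ a₀ < a)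
    {G : Type*} [AddGroup G] [PartialOrder G]
    [CovariantClass G G (· + ·) (· ≤ ·)]
    [CovariantClass G G (Function.swap (· + ·)) (· ≤ ·)]
    (hdir : ∀ x y : G, ∃ z : G, x ≤ z ∧ y ≤ z) (hG : RDP G)
    (α₁ α₂ β₁ β₂ : StrictPi A) (g₁ g₂ h₁ h₂ : G)
    (ha₁ : (0 : StrictPi A ×ₗ G) ≤ toLex (α₁, g₁))
    (ha₂ : (0 : StrictPi A ×ₗ G) ≤ toLex (α₂, g₂))
    (hb₁ : (0 : StrictPi A ×ₗ G) ≤ toLex (β₁, h₁))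
    (hb₂ : (0 : StrictPi A ×ₗ G) ≤ toLex (β₂, h₂))
    (hsum : α₁ + α₂ = β₁ + β₂) (hsumG : g₁ + g₂ = h₁ + h₂) :
    ∃ c₁₁ c₁₂ c₂₁ c₂₂ : StrictPi A ×ₗ G, 0 ≤ c₁₁ ∧ 0 ≤ c₁₂ ∧ 0 ≤ c₂₁ ∧ 0 ≤ c₂₂ ∧
      toLex (α₁, g₁) = c₁₁ + c₁₂ ∧ toLex (α₂, g₂) = c₂₁ + c₂₂ ∧
      toLex (β₁, h₁) = c₁₁ + c₂₁ ∧ toLex (β₂, h₂) = c₁₂ + c₂₂ := by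
  -- G-side universal identities
  have hg₂' : g₂ = -g₁ + h₁ + h₂ := by rw [add_assoc, ← hsumG, neg_add_cancel_left]
  have hh₁' : h₁ = g₁ + (-g₁ + h₁) := (add_neg_cancel_left g₁ h₁).symm
  have hh₂' : h₂ = -h₁ + g₁ + g₂ := by rw [add_assoc, hsumG, neg_add_cancel_left]
  have hg₁' : g₁ = h₁ + (-h₁ + g₁) := (add_neg_cancel_left h₁ g₁).symm
  rcases lex_nonneg_elim ha₁ with ⟨hα₁0, hg₁⟩ | ⟨hα₁ne, hα₁P⟩
  · rcases lex_nonneg_elim ha₂ with ⟨hα₂0, hg₂⟩ | ⟨hα₂ne, hα₂P⟩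
    · -- α₁ = 0, α₂ = 0 : β₁ + β₂ = 0
      have hβsum : β₁ + β₂ = 0 := by rw [← hsum, hα₁0, hα₂0, zero_add]
      rcases lex_nonneg_elim hb₁ with ⟨hβ₁0, hh₁⟩ | ⟨hβ₁ne, hβ₁P⟩
      · have hβ₂0 : β₂ = 0 := by rwa [hβ₁0, zero_add] at hβsum
        rcases lex_nonneg_elim hb₂ with ⟨_, hh₂⟩ | ⟨hβ₂ne, _⟩
        · obtain ⟨d₁₁, d₁₂, d₂₁, d₂₂, q₁₁, q₁₂, q₂₁, q₂₂, e₁, e₂, e₃, e₄⟩ :=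
            hG g₁ g₂ h₁ h₂ hg₁ hg₂ hh₁ hh₂ hsumG
          refine ⟨toLex (0, d₁₁), toLex (0, d₁₂), toLex (0, d₂₁), toLex (0, d₂₂),
            lex_nonneg_of_zero q₁₁, lex_nonneg_of_zero q₁₂,
            lex_nonneg_of_zero q₂₁, lex_nonneg_of_zero q₂₂, ?_, ?_, ?_, ?_⟩ <;>
            rw [lex_add] <;>
            [exact lex_eq_s7 (by rw [hα₁0, add_zero]) e₁;
             exact lex_eq_s7 (by rw [hα₂0, add_zero]) e₂;
             exact lex_eq_s7 (by rw [hβ₁0, add_zero]) e₃;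
             exact lex_eq_s7 (by rw [hβ₂0, add_zero]) e₄]
        · exact absurd hβ₂0 hβ₂ne
      · rcases lex_nonneg_elim hb₂ with ⟨hβ₂0, _⟩ | ⟨hβ₂ne, hβ₂P⟩
        · exact absurd (by rwa [hβ₂0, add_zero] at hβsum : β₁ = 0) hβ₁ne
        · obtain ⟨i⟩ := nonempty_index hβ₁ne
          have : β₁ i + β₂ i = 0 := congrFun hβsum i
          exact absurd this (ne_of_gt (add_pos (hβ₁P i) (hβ₂P i)))
    · -- α₁ = 0, α₂ strictly positive
      have hα₂β : α₂ = β₁ + β₂ := by rw [← hsum, hα₁0, zero_add]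
      rcases lex_nonneg_elim hb₁ with ⟨hβ₁0, hh₁⟩ | ⟨hβ₁ne, hβ₁P⟩
      · -- β₁ = 0 : B1, trick
        have hβ₂α : β₂ = α₂ := by rw [hα₂β, hβ₁0, zero_add]
        rcases lex_nonneg_elim hb₂ with ⟨hβ₂0, _⟩ | ⟨hβ₂ne, hβ₂P⟩
        · exact absurd (hβ₂α.symm.trans hβ₂0) hα₂ne
        · obtain ⟨d₁₁, d₁₂, d₂₁, d₂₂, q₁₁, q₁₂, q₂₁, e₁, e₂, e₃, e₄⟩ :=
            trickRight hdir hG hg₁ hh₁ hsumG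
          refine ⟨toLex (0, d₁₁), toLex (0, d₁₂), toLex (0, d₂₁), toLex (β₂, d₂₂),
            lex_nonneg_of_zero q₁₁, lex_nonneg_of_zero q₁₂,
            lex_nonneg_of_zero q₂₁, lex_nonneg_of_pos hβ₂ne hβ₂P _, ?_, ?_, ?_, ?_⟩ <;>
            rw [lex_add] <;>
            [exact lex_eq_s7 (by rw [hα₁0, add_zero]) e₁;
             exact lex_eq_s7 (by rw [← hβ₂α, zero_add]) e₂;
             exact lex_eq_s7 (by rw [hβ₁0, add_zero]) e₃;
             exact lex_eq_s7 (by rw [zero_add]) e₄]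
      · -- β₁ strictly positive : B2/B3
        refine ⟨toLex (0, g₁), toLex (0, 0), toLex (β₁, -g₁ + h₁), toLex (β₂, h₂),
          lex_nonneg_of_zero hg₁, lex_nonneg_of_zero le_rfl,
          lex_nonneg_of_pos hβ₁ne hβ₁P _, hb₂, ?_, ?_, ?_, ?_⟩ <;>
          rw [lex_add] <;>
          [exact lex_eq_s7 (by rw [hα₁0, add_zero]) (add_zero g₁).symm;
           exact lex_eq_s7 hα₂β hg₂';
           exact lex_eq_s7 (zero_add β₁).symm hh₁';
           exact lex_eq_s7 (zero_add β₂).symm (zero_add h₂).symm]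
  · rcases lex_nonneg_elim ha₂ with ⟨hα₂0, hg₂⟩ | ⟨hα₂ne, hα₂P⟩
    · -- α₁ strictly positive, α₂ = 0
      have hα₁β : α₁ = β₁ + β₂ := by rw [← hsum, hα₂0, add_zero]
      rcases lex_nonneg_elim hb₂ with ⟨hβ₂0, hh₂⟩ | ⟨hβ₂ne, hβ₂P⟩
      · -- β₂ = 0 : C1, trick
        have hβ₁α : β₁ = α₁ := by rw [hα₁β, hβ₂0, add_zero]
        obtain ⟨d₁₁, d₁₂, d₂₁, d₂₂, q₁₂, q₂₁, q₂₂, e₁, e₂, e₃, e₄⟩ :=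
          trickLeft hdir hG hg₂ hh₂ hsumG
        refine ⟨toLex (α₁, d₁₁), toLex (0, d₁₂), toLex (0, d₂₁), toLex (0, d₂₂),
          lex_nonneg_of_pos hα₁ne hα₁P _, lex_nonneg_of_zero q₁₂,
          lex_nonneg_of_zero q₂₁, lex_nonneg_of_zero q₂₂, ?_, ?_, ?_, ?_⟩ <;>
          rw [lex_add] <;>
          [exact lex_eq_s7 (add_zero α₁).symm e₁;
           exact lex_eq_s7 (by rw [hα₂0, add_zero]) e₂;
           exact lex_eq_s7 (by rw [hβ₁α, add_zero]) e₃;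
           exact lex_eq_s7 (by rw [hβ₂0, add_zero]) e₄]
      · -- β₂ strictly positive : C2/C3
        refine ⟨toLex (β₁, h₁), toLex (β₂, -h₁ + g₁), toLex (0, 0), toLex (0, g₂),
          hb₁, lex_nonneg_of_pos hβ₂ne hβ₂P _,
          lex_nonneg_of_zero le_rfl, lex_nonneg_of_zero hg₂, ?_, ?_, ?_, ?_⟩ <;>
          rw [lex_add] <;>
          [exact lex_eq_s7 hα₁β hg₁';
           exact lex_eq_s7 (by rw [hα₂0, add_zero]) (zero_add g₂).symm;
           exact lex_eq_s7 (add_zero β₁).symm (add_zero h₁).symm;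
           exact lex_eq_s7 (add_zero β₂).symm hh₂']
    · -- α₁, α₂ strictly positive
      rcases lex_nonneg_elim hb₁ with ⟨hβ₁0, hh₁⟩ | ⟨hβ₁ne, hβ₁P⟩
      · -- β₁ = 0 : D1
        have hβ₂α : β₂ = α₁ + α₂ := by rw [hsum, hβ₁0, zero_add]
        refine ⟨toLex (0, h₁), toLex (α₁, -h₁ + g₁), toLex (0, 0), toLex (α₂, g₂),
          lex_nonneg_of_zero hh₁, lex_nonneg_of_pos hα₁ne hα₁P _,
          lex_nonneg_of_zero le_rfl, lex_nonneg_of_pos hα₂ne hα₂P _, ?_, ?_, ?_, ?_⟩ <;>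
          rw [lex_add] <;>
          [exact lex_eq_s7 (zero_add α₁).symm hg₁';
           exact lex_eq_s7 (zero_add α₂).symm (zero_add g₂).symm;
           exact lex_eq_s7 (by rw [hβ₁0, add_zero]) (add_zero h₁).symm;
           exact lex_eq_s7 hβ₂α hh₂']
      · rcases lex_nonneg_elim hb₂ with ⟨hβ₂0, hh₂⟩ | ⟨hβ₂ne, hβ₂P⟩
        · -- β₂ = 0 : D2
          have hβ₁α : β₁ = α₁ + α₂ := by rw [hsum, hβ₂0, add_zero]
          refine ⟨toLex (α₁, g₁), toLex (0, 0), toLex (α₂, -g₁ + h₁), toLex (0, h₂),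
            ha₁, lex_nonneg_of_zero le_rfl,
            lex_nonneg_of_pos hα₂ne hα₂P _, lex_nonneg_of_zero hh₂, ?_, ?_, ?_, ?_⟩ <;>
            rw [lex_add] <;>
            [exact lex_eq_s7 (add_zero α₁).symm (add_zero g₁).symm;
             exact lex_eq_s7 (add_zero α₂).symm hg₂';
             exact lex_eq_s7 hβ₁α hh₁';
             exact lex_eq_s7 (by rw [hβ₂0, add_zero]) (zero_add h₂).symm]
        · -- all four strictly positive : D3
          obtain ⟨i₀⟩ := nonempty_index hα₁ne
          obtain ⟨γ₁₁, γ₁₂, γ₂₁, γ₂₂, p₁₁, p₁₂, p₂₁, p₂₂, e₁, e₂, e₃, e₄⟩ :=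
            piDecomp hdense hα₁P hα₂P hβ₁P hβ₂P hsum
          refine ⟨toLex (γ₁₁, g₁), toLex (γ₁₂, 0), toLex (γ₂₁, -g₁ + h₁), toLex (γ₂₂, h₂),
            lex_nonneg_of_pos (strictPi_ne_zero i₀ (p₁₁ i₀)) p₁₁ _,
            lex_nonneg_of_pos (strictPi_ne_zero i₀ (p₁₂ i₀)) p₁₂ _,
            lex_nonneg_of_pos (strictPi_ne_zero i₀ (p₂₁ i₀)) p₂₁ _,
            lex_nonneg_of_pos (strictPi_ne_zero i₀ (p₂₂ i₀)) p₂₂ _, ?_, ?_, ?_, ?_⟩ <;>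
            rw [lex_add] <;>
            [exact lex_eq_s7 e₁ (add_zero g₁).symm;
             exact lex_eq_s7 e₂ hg₂';
             exact lex_eq_s7 e₃ hh₁';
             exact lex_eq_s7 e₄ (zero_add h₂).symm]

/-- Let `{Aᵢ}` be a family of non-trivial Abelian linearly ordered groups
such that every strictly positive element of each `Aᵢ` dominates a strictly positive
element. Let `A = ∏ i, Aᵢ` carry the strict product ordering and let `G` be a directed
po-group with RDP. Then the lexicographic product `A ×ₗ G` satisfies RDP. -/
theorem rdp_lex_strictPi {I : Type*} (A : I → Type*)
    [∀ i, AddCommGroup (A i)] [∀ i, LinearOrder (A i)] [∀ i, IsOrderedAddMonoid (A i)] [∀ i, Nontrivial (A i)]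
    (hdense : ∀ i, ∀ a : A i, 0 < a → ∃ a₀ : A i, 0 < a₀ ∧ a₀ < a)
    {G : Type*} [AddGroup G] [PartialOrder G]
    [CovariantClass G G (· + ·) (· ≤ ·)]
    [CovariantClass G G (Function.swap (· + ·)) (· ≤ ·)]
    (hdir : ∀ x y : G, ∃ z : G, x ≤ z ∧ y ≤ z)
    (hG : RDP G) :
    RDP (StrictPi A ×ₗ G) := by
  intro a₁ a₂ b₁ b₂ ha₁ ha₂ hb₁ hb₂ hsum
  have hsumA : (ofLex a₁).1 + (ofLex a₂).1 = (ofLex b₁).1 + (ofLex b₂).1 :=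
    congrArg (fun x => (ofLex x).1) hsum
  have hsumG : (ofLex a₁).2 + (ofLex a₂).2 = (ofLex b₁).2 + (ofLex b₂).2 :=
    congrArg (fun x => (ofLex x).2) hsum
  exact coreLemma hdense hdir hG (ofLex a₁).1 (ofLex a₂).1 (ofLex b₁).1 (ofLex b₂).1
    (ofLex a₁).2 (ofLex a₂).2 (ofLex b₁).2 (ofLex b₂).2 ha₁ ha₂ hb₁ hb₂ hsumA hsumG
end

section
/- Let {Aᵢ : i ∈ I} be a family of linearly ordered groups and let A = ∏_{i∈I} Aᵢ carry the componentwise (product) partial order. Let G be a directed Abelian po-group with RDP₁. Then the lexicographic product A ×⃗ G satisfies RDP₁. -/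
/-- Riesz decomposition in a linearly ordered group, with one of the off-diagonal
entries equal to zero. -/
lemma lin_decomp {B : Type*} [AddGroup B] [LinearOrder B]
    [CovariantClass B B (· + ·) (· ≤ ·)]
    [CovariantClass B B (Function.swap (· + ·)) (· ≤ ·)]
    (a₁ a₂ b₁ b₂ : B) (ha₁ : 0 ≤ a₁) (ha₂ : 0 ≤ a₂) (_hb₁ : 0 ≤ b₁) (hb₂ : 0 ≤ b₂)
    (h : a₁ + a₂ = b₁ + b₂) :
    ∃ c₁₁ c₁₂ c₂₁ c₂₂ : B, 0 ≤ c₁₁ ∧ 0 ≤ c₁₂ ∧ 0 ≤ c₂₁ ∧ 0 ≤ c₂₂ ∧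
      a₁ = c₁₁ + c₁₂ ∧ a₂ = c₂₁ + c₂₂ ∧ b₁ = c₁₁ + c₂₁ ∧ b₂ = c₁₂ + c₂₂ ∧
      (c₁₂ = 0 ∨ c₂₁ = 0) := by
  rcases le_total a₁ b₁ with hle | hle
  · refine ⟨a₁, 0, -a₁ + b₁, b₂, ha₁, le_rfl, ?_, hb₂, (add_zero a₁).symm, ?_, ?_, ?_,
      Or.inl rfl⟩
    · rw [le_neg_add_iff_add_le, add_zero]; exact hle
    · rw [add_assoc, ← h, neg_add_cancel_left]
    · rw [add_neg_cancel_left]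
    · rw [zero_add]
  · refine ⟨b₁, -b₁ + a₁, 0, a₂, _hb₁, ?_, le_rfl, ha₂, ?_, (zero_add a₂).symm,
      (add_zero b₁).symm, ?_, Or.inr rfl⟩
    · rw [le_neg_add_iff_add_le, add_zero]; exact hle
    · rw [add_neg_cancel_left]
    · rw [add_assoc, h, neg_add_cancel_left]

/-- RDP₁ (indeed RDP) implies the Riesz interpolation property in an abelian po-group. -/
lemma rdp1_interp {G : Type*} [AddCommGroup G] [PartialOrder G]
    [CovariantClass G G (· + ·) (· ≤ ·)] (hG : RDP1 G)
    (a₁ a₂ b₁ b₂ : G) (h11 : a₁ ≤ b₁) (h12 : a₁ ≤ b₂) (h21 : a₂ ≤ b₁) (h22 : a₂ ≤ b₂) :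
    ∃ z : G, a₁ ≤ z ∧ a₂ ≤ z ∧ z ≤ b₁ ∧ z ≤ b₂ := by
  obtain ⟨c₁₁, c₁₂, c₂₁, c₂₂, p11, p12, p21, p22, e1, e2, e3, e4, -⟩ :=
    hG (b₁ - a₁) (b₂ - a₂) (b₁ - a₂) (b₂ - a₁)
      (sub_nonneg.2 h11) (sub_nonneg.2 h22) (sub_nonneg.2 h21) (sub_nonneg.2 h12)
      (by abel)
  refine ⟨a₁ + c₁₂, le_add_of_nonneg_right p12, ?_, ?_, ?_⟩
  · have key : a₁ + c₁₂ - a₂ = c₂₁ := by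
      have h4 : c₁₂ = b₂ - a₁ - c₂₂ := by rw [e4]; abel
      have h2 : c₂₁ = b₂ - a₂ - c₂₂ := by rw [e2]; abel
      rw [h4, h2]; abel
    rw [← sub_nonneg, key]; exact p21
  · have key : b₁ - (a₁ + c₁₂) = c₁₁ := by
      have h' : b₁ - (a₁ + c₁₂) = (b₁ - a₁) - c₁₂ := by abel
      rw [h', e1]; abel
    rw [← sub_nonneg, key]; exact p11
  · have key : b₂ - (a₁ + c₁₂) = c₂₂ := by
      have h' : b₂ - (a₁ + c₁₂) = (b₂ - a₁) - c₁₂ := by abel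
      rw [h', e4]; abel
    rw [← sub_nonneg, key]; exact p22

/-- Let `{Aᵢ}` be a family of linearly ordered groups, let `A = ∏ i, Aᵢ`
carry the componentwise partial order, and let `G` be a directed Abelian po-group with
RDP₁. Then the lexicographic product `A ×ₗ G` satisfies RDP₁. -/
theorem rdp1_lex_pi_linear {I : Type*} (A : I → Type*)
    [∀ i, AddGroup (A i)] [∀ i, LinearOrder (A i)]
    [∀ i, CovariantClass (A i) (A i) (· + ·) (· ≤ ·)]
    [∀ i, CovariantClass (A i) (A i) (Function.swap (· + ·)) (· ≤ ·)]
    {G : Type*} [AddCommGroup G] [PartialOrder G]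
    [CovariantClass G G (· + ·) (· ≤ ·)]
    (hdir : ∀ x y : G, ∃ z : G, x ≤ z ∧ y ≤ z)
    (hG : RDP1 G) :
    RDP1 ((∀ i, A i) ×ₗ G) := by
  classical
  intro a₁ a₂ b₁ b₂ ha₁ ha₂ hb₁ hb₂ hsum
  have fle : ∀ x y : (∀ i, A i) ×ₗ G, x ≤ y → (ofLex x).1 ≤ (ofLex y).1 := by
    intro x y h
    rcases Prod.Lex.le_iff.1 h with h | h
    · exact h.le
    · exact h.1.le
  have sle : ∀ x y : (∀ i, A i) ×ₗ G, x ≤ y → (ofLex x).1 = (ofLex y).1 →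
      (ofLex x).2 ≤ (ofLex y).2 := by
    intro x y h he
    rcases Prod.Lex.le_iff.1 h with h | h
    · exact absurd he h.ne
    · exact h.2
  set α₁ := (ofLex a₁).1 with hα₁
  set α₂ := (ofLex a₂).1 with hα₂
  set β₁ := (ofLex b₁).1 with hβ₁
  set β₂ := (ofLex b₂).1 with hβ₂
  set g₁ := (ofLex a₁).2 with hg₁
  set g₂ := (ofLex a₂).2 with hg₂
  set h₁ := (ofLex b₁).2 with hh₁
  set h₂ := (ofLex b₂).2 with hh₂
  have hαsum : α₁ + α₂ = β₁ + β₂ := congrArg (fun p => (ofLex p).1) hsum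
  have hgsum : g₁ + g₂ = h₁ + h₂ := congrArg (fun p => (ofLex p).2) hsum
  have hα₁0 : (0 : ∀ i, A i) ≤ α₁ := fle 0 a₁ ha₁
  have hα₂0 : (0 : ∀ i, A i) ≤ α₂ := fle 0 a₂ ha₂
  have hβ₁0 : (0 : ∀ i, A i) ≤ β₁ := fle 0 b₁ hb₁
  have hβ₂0 : (0 : ∀ i, A i) ≤ β₂ := fle 0 b₂ hb₂
  have H : ∀ i, ∃ c₁₁ c₁₂ c₂₁ c₂₂ : A i, 0 ≤ c₁₁ ∧ 0 ≤ c₁₂ ∧ 0 ≤ c₂₁ ∧ 0 ≤ c₂₂ ∧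
      α₁ i = c₁₁ + c₁₂ ∧ α₂ i = c₂₁ + c₂₂ ∧ β₁ i = c₁₁ + c₂₁ ∧ β₂ i = c₁₂ + c₂₂ ∧
      (c₁₂ = 0 ∨ c₂₁ = 0) := fun i =>
    lin_decomp (α₁ i) (α₂ i) (β₁ i) (β₂ i) (hα₁0 i) (hα₂0 i) (hβ₁0 i) (hβ₂0 i)
      (congrFun hαsum i)
  choose γ₁₁ γ₁₂ γ₂₁ γ₂₂ p11 p12 p21 p22 e1 e2 e3 e4 hz using H
  have hA1 : γ₁₁ = 0 → γ₁₂ = 0 → α₁ = 0 := by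
    intro h h'; funext i
    have := e1 i; rw [congrFun h i, congrFun h' i] at this; simpa using this
  have hA2 : γ₂₁ = 0 → γ₂₂ = 0 → α₂ = 0 := by
    intro h h'; funext i
    have := e2 i; rw [congrFun h i, congrFun h' i] at this; simpa using this
  have hB1 : γ₁₁ = 0 → γ₂₁ = 0 → β₁ = 0 := by
    intro h h'; funext i
    have := e3 i; rw [congrFun h i, congrFun h' i] at this; simpa using this
  have hB2 : γ₁₂ = 0 → γ₂₂ = 0 → β₂ = 0 := by
    intro h h'; funext i
    have := e4 i; rw [congrFun h i, congrFun h' i] at this; simpa using this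
  have snd_nonneg : ∀ x : (∀ i, A i) ×ₗ G, 0 ≤ x → (ofLex x).1 = 0 → 0 ≤ (ofLex x).2 := by
    intro x hx he
    exact sle 0 x hx (by simpa using he.symm)
  -- common lower and upper bounds for {0, h₁ - g₂, g₁, h₁}
  obtain ⟨u', hu'1, hu'2⟩ := hdir 0 (h₁ - g₂)
  obtain ⟨u'', hu''1, hu''2⟩ := hdir g₁ h₁
  obtain ⟨u, hu1, hu2⟩ := hdir u' u''
  obtain ⟨l', hl'1, hl'2⟩ := hdir 0 (-(h₁ - g₂))
  obtain ⟨l'', hl''1, hl''2⟩ := hdir (-g₁) (-h₁)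
  obtain ⟨ml, hml1, hml2⟩ := hdir l' l''
  set l := -ml with hl
  have hl0 : l ≤ 0 := by
    rw [hl, neg_le]; simpa using le_trans hl'1 hml1
  have hlhg : l ≤ h₁ - g₂ := by
    rw [hl, neg_le]; simpa using le_trans hl'2 hml1
  have hlg1 : l ≤ g₁ := by
    rw [hl, neg_le]; simpa using le_trans hl''1 hml2
  have hlh1 : l ≤ h₁ := by
    rw [hl, neg_le]; simpa using le_trans hl''2 hml2
  have hu0 : (0 : G) ≤ u := le_trans hu'1 hu1
  have huhg : h₁ - g₂ ≤ u := le_trans hu'2 hu1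
  have hug1 : g₁ ≤ u := le_trans hu''1 hu2
  have huh1 : h₁ ≤ u := le_trans hu''2 hu2
  have hlu : l ≤ u := le_trans hl0 hu0
  set L₁ : G := if γ₁₁ = 0 then 0 else l with hL₁
  set L₂ : G := if γ₂₂ = 0 then h₁ - g₂ else l with hL₂
  set U₁ : G := if γ₁₂ = 0 then g₁ else u with hU₁
  set U₂ : G := if γ₂₁ = 0 then h₁ else u with hU₂
  have hL₁U₁ : L₁ ≤ U₁ := by
    rw [hL₁, hU₁]
    split_ifs with h h' h'
    · exact snd_nonneg a₁ ha₁ (hA1 h h')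
    · exact hu0
    · exact hlg1
    · exact hlu
  have hL₁U₂ : L₁ ≤ U₂ := by
    rw [hL₁, hU₂]
    split_ifs with h h' h'
    · exact snd_nonneg b₁ hb₁ (hB1 h h')
    · exact hu0
    · exact hlh1
    · exact hlu
  have hL₂U₁ : L₂ ≤ U₁ := by
    rw [hL₂, hU₁]
    split_ifs with h h' h'
    · have hh2 : 0 ≤ h₂ := snd_nonneg b₂ hb₂ (hB2 h' h)
      have key : g₁ - (h₁ - g₂) = h₂ := by
        have h'' : g₁ - (h₁ - g₂) = (g₁ + g₂) - h₁ := by abel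
        rw [h'', hgsum]; abel
      rw [← sub_nonneg, key]; exact hh2
    · exact huhg
    · exact hlg1
    · exact hlu
  have hL₂U₂ : L₂ ≤ U₂ := by
    rw [hL₂, hU₂]
    split_ifs with h h' h'
    · have hg2 : 0 ≤ g₂ := snd_nonneg a₂ ha₂ (hA2 h' h)
      have key : h₁ - (h₁ - g₂) = g₂ := by abel
      rw [← sub_nonneg, key]; exact hg2
    · exact huhg
    · exact hlh1
    · exact hlu
  obtain ⟨t, htL₁, htL₂, htU₁, htU₂⟩ := rdp1_interp hG L₁ L₂ U₁ U₂ hL₁U₁ hL₁U₂ hL₂U₁ hL₂U₂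
  refine ⟨toLex (γ₁₁, t), toLex (γ₁₂, g₁ - t), toLex (γ₂₁, h₁ - t),
    toLex (γ₂₂, g₂ - (h₁ - t)), ?_, ?_, ?_, ?_, ?_, ?_, ?_, ?_, ?_⟩
  · by_cases h : γ₁₁ = 0
    · refine Prod.Lex.le_iff.2 (Or.inr ⟨h.symm, ?_⟩)
      have hL : L₁ = 0 := by rw [hL₁, if_pos h]
      show (0 : G) ≤ t
      exact hL ▸ htL₁
    · exact Prod.Lex.le_iff.2 (Or.inl (lt_of_le_of_ne (fun i => p11 i) (Ne.symm h)))
  · by_cases h : γ₁₂ = 0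
    · refine Prod.Lex.le_iff.2 (Or.inr ⟨h.symm, ?_⟩)
      have hU : U₁ = g₁ := by rw [hU₁, if_pos h]
      show (0 : G) ≤ g₁ - t
      rw [le_sub_iff_add_le, zero_add]; exact hU ▸ htU₁
    · exact Prod.Lex.le_iff.2 (Or.inl (lt_of_le_of_ne (fun i => p12 i) (Ne.symm h)))
  · by_cases h : γ₂₁ = 0
    · refine Prod.Lex.le_iff.2 (Or.inr ⟨h.symm, ?_⟩)
      have hU : U₂ = h₁ := by rw [hU₂, if_pos h]
      show (0 : G) ≤ h₁ - t
      rw [le_sub_iff_add_le, zero_add]; exact hU ▸ htU₂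
    · exact Prod.Lex.le_iff.2 (Or.inl (lt_of_le_of_ne (fun i => p21 i) (Ne.symm h)))
  · by_cases h : γ₂₂ = 0
    · refine Prod.Lex.le_iff.2 (Or.inr ⟨h.symm, ?_⟩)
      have hL : L₂ = h₁ - g₂ := by rw [hL₂, if_pos h]
      have ht : h₁ - g₂ ≤ t := hL ▸ htL₂
      show (0 : G) ≤ g₂ - (h₁ - t)
      rw [le_sub_iff_add_le, zero_add, sub_le_iff_le_add]
      have := sub_le_iff_le_add.1 ht
      rwa [add_comm] at this
    · exact Prod.Lex.le_iff.2 (Or.inl (lt_of_le_of_ne (fun i => p22 i) (Ne.symm h)))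
  · apply ofLex.injective
    apply Prod.ext
    · exact funext e1
    · show g₁ = t + (g₁ - t); abel
  · apply ofLex.injective
    apply Prod.ext
    · exact funext e2
    · show g₂ = (h₁ - t) + (g₂ - (h₁ - t)); abel
  · apply ofLex.injective
    apply Prod.ext
    · exact funext e3
    · show h₁ = t + (h₁ - t); abel
  · apply ofLex.injective
    apply Prod.ext
    · exact funext e4
    · show h₂ = (g₁ - t) + (g₂ - (h₁ - t))
      have key : h₂ = g₁ + g₂ - h₁ := by rw [hgsum]; abel
      rw [key]; abel
  · intro x y hx0 hxc hy0 hyc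
    apply ofLex.injective
    apply Prod.ext
    · funext i
      have hξ0 : (0 : ∀ i, A i) ≤ (ofLex x).1 := fle 0 x hx0
      have hξu : (ofLex x).1 ≤ γ₁₂ := fle x _ hxc
      have hη0 : (0 : ∀ i, A i) ≤ (ofLex y).1 := fle 0 y hy0
      have hηu : (ofLex y).1 ≤ γ₂₁ := fle y _ hyc
      rcases hz i with h | h
      · have : (ofLex x).1 i = 0 :=
          le_antisymm (le_of_le_of_eq (hξu i) h) (hξ0 i)
        show (ofLex x).1 i + (ofLex y).1 i = (ofLex y).1 i + (ofLex x).1 i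
        rw [this, zero_add, add_zero]
      · have : (ofLex y).1 i = 0 :=
          le_antisymm (le_of_le_of_eq (hηu i) h) (hη0 i)
        show (ofLex x).1 i + (ofLex y).1 i = (ofLex y).1 i + (ofLex x).1 i
        rw [this, zero_add, add_zero]
    · show (ofLex x).2 + (ofLex y).2 = (ofLex y).2 + (ofLex x).2
      exact add_comm _ _
end

section
/- Let A be a po-group and G a com-directed po-group. Then the lexicographic product A ×⃗ G satisfies RDP if and only if both A and G satisfy RDP. -/
set_option linter.unusedSectionVars false

/-- A po-group is com-directed if every two elements have a lower bound lying in the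
center. -/
def ComDirected (G : Type*) [AddGroup G] [PartialOrder G] : Prop :=
  ∀ x y : G, ∃ d : G, (∀ z : G, d + z = z + d) ∧ d ≤ x ∧ d ≤ y

namespace RDPAux

section POGroup

variable {G : Type*} [AddGroup G] [PartialOrder G]
    [CovariantClass G G (· + ·) (· ≤ ·)]
    [CovariantClass G G (Function.swap (· + ·)) (· ≤ ·)]

lemma nonneg_neg_add {a b : G} (h : a ≤ b) : 0 ≤ -a + b := by
  have := add_le_add_right h (-a)
  rwa [neg_add_cancel] at this

lemma nonneg_add_neg {a b : G} (h : a ≤ b) : 0 ≤ b + -a := by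
  rw [← sub_eq_add_neg]
  exact sub_nonneg.2 h

lemma central_neg {d : G} (hd : ∀ z : G, d + z = z + d) (z : G) : -d + z = z + -d := by
  calc -d + z = -d + (z + d) + -d := by rw [add_assoc, add_neg_cancel_right]
    _ = -d + (d + z) + -d := by rw [← hd z]
    _ = z + -d := by rw [neg_add_cancel_left]

lemma eq_zero_pair_of_nonneg {a b : G} (ha : 0 ≤ a) (hb : 0 ≤ b) (h : a + b = 0) :
    a = 0 ∧ b = 0 := by
  have h1 : a ≤ 0 := by
    calc a = a + 0 := (add_zero a).symm
      _ ≤ a + b := add_le_add_right hb a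
      _ = 0 := h
  have ha0 : a = 0 := le_antisymm h1 ha
  refine ⟨ha0, ?_⟩
  rw [ha0, zero_add] at h
  exact h

/-- The key combinatorial lemma on the second components: given the boundary
positivity conditions, one can always solve the Riesz system in `G` with positivity
at the prescribed slots. -/
lemma solveG (hcd : ComDirected G) (hG : RDP G)
    (g₁ g₂ h₁ h₂ : G) (heq : g₁ + g₂ = h₁ + h₂)
    (z₁₁ z₁₂ z₂₁ z₂₂ : Prop)
    (hg₁ : z₁₁ → z₁₂ → 0 ≤ g₁) (hg₂ : z₂₁ → z₂₂ → 0 ≤ g₂)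
    (hh₁ : z₁₁ → z₂₁ → 0 ≤ h₁) (hh₂ : z₁₂ → z₂₂ → 0 ≤ h₂) :
    ∃ d₁₁ d₁₂ d₂₁ d₂₂ : G,
      (z₁₁ → 0 ≤ d₁₁) ∧ (z₁₂ → 0 ≤ d₁₂) ∧ (z₂₁ → 0 ≤ d₂₁) ∧ (z₂₂ → 0 ≤ d₂₂) ∧
      g₁ = d₁₁ + d₁₂ ∧ g₂ = d₂₁ + d₂₂ ∧ h₁ = d₁₁ + d₂₁ ∧ h₂ = d₁₂ + d₂₂ := by
  -- Corner solution P : (h₁, -h₁+g₁, 0, g₂)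
  have eP1 : g₁ = h₁ + (-h₁ + g₁) := (add_neg_cancel_left h₁ g₁).symm
  have eP2 : g₂ = (0 : G) + g₂ := (zero_add g₂).symm
  have eP3 : h₁ = h₁ + 0 := (add_zero h₁).symm
  have eP4 : h₂ = (-h₁ + g₁) + g₂ := by rw [add_assoc, heq, neg_add_cancel_left]
  -- Corner solution Q : (g₁, 0, -g₁+h₁, h₂)
  have eQ1 : g₁ = g₁ + 0 := (add_zero g₁).symm
  have eQ2 : g₂ = (-g₁ + h₁) + h₂ := by rw [add_assoc, ← heq, neg_add_cancel_left]
  have eQ3 : h₁ = g₁ + (-g₁ + h₁) := (add_neg_cancel_left g₁ h₁).symm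
  have eQ4 : h₂ = (0 : G) + h₂ := (zero_add h₂).symm
  -- Solution family "diag": shift of P by a central element `d ≤ h₁, d ≤ g₂`.
  have diag : ∃ d₁₁ d₁₂ d₂₁ d₂₂ : G, 0 ≤ d₁₁ ∧ 0 ≤ d₂₂ ∧
      g₁ = d₁₁ + d₁₂ ∧ g₂ = d₂₁ + d₂₂ ∧ h₁ = d₁₁ + d₂₁ ∧ h₂ = d₁₂ + d₂₂ := by
    obtain ⟨d, hdc, hd1, hd2⟩ := hcd h₁ g₂
    refine ⟨h₁ - d, -(h₁ - d) + g₁, d, -d + g₂, sub_nonneg.2 hd1, nonneg_neg_add hd2,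
      (add_neg_cancel_left _ _).symm, (add_neg_cancel_left _ _).symm,
      (sub_add_cancel h₁ d).symm, ?_⟩
    have : (-(h₁ - d) + g₁) + (-d + g₂) = h₂ := by
      calc (-(h₁ - d) + g₁) + (-d + g₂)
          = ((d - h₁) + g₁) + (g₂ + -d) := by rw [neg_sub, central_neg hdc g₂]
        _ = d + (-h₁ + (g₁ + g₂)) + -d := by simp only [sub_eq_add_neg, add_assoc]
        _ = d + (-h₁ + (h₁ + h₂)) + -d := by rw [heq]
        _ = d + h₂ + -d := by rw [neg_add_cancel_left]
        _ = h₂ + d + -d := by rw [hdc h₂]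
        _ = h₂ := by rw [add_assoc, add_neg_cancel, add_zero]
    exact this.symm
  -- Solution family "anti": shift of Q by a central element `d ≤ 0, d ≤ -g₁+h₁`.
  have anti : ∃ d₁₁ d₁₂ d₂₁ d₂₂ : G, 0 ≤ d₁₂ ∧ 0 ≤ d₂₁ ∧
      g₁ = d₁₁ + d₁₂ ∧ g₂ = d₂₁ + d₂₂ ∧ h₁ = d₁₁ + d₂₁ ∧ h₂ = d₁₂ + d₂₂ := by
    obtain ⟨d, hdc, hd0, hdw⟩ := hcd 0 (-g₁ + h₁)
    refine ⟨g₁ + d, -d, -d + (-g₁ + h₁), d + h₂, neg_nonneg.2 hd0, nonneg_neg_add hdw,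
      (add_neg_cancel_right g₁ d).symm, ?_, ?_, (neg_add_cancel_left d h₂).symm⟩
    · have : (-d + (-g₁ + h₁)) + (d + h₂) = g₂ := by
        calc (-d + (-g₁ + h₁)) + (d + h₂)
            = -d + ((-g₁ + h₁) + d) + h₂ := by simp only [add_assoc]
          _ = -d + (d + (-g₁ + h₁)) + h₂ := by rw [← hdc (-g₁ + h₁)]
          _ = (-g₁ + h₁) + h₂ := by rw [neg_add_cancel_left]
          _ = -g₁ + (g₁ + g₂) := by rw [add_assoc, ← heq]
          _ = g₂ := neg_add_cancel_left g₁ g₂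
      exact this.symm
    · rw [add_assoc, add_neg_cancel_left, add_neg_cancel_left]
  -- Now a case analysis on the four propositions.
  by_cases H11 : z₁₁ <;> by_cases H12 : z₁₂ <;> by_cases H21 : z₂₁ <;> by_cases H22 : z₂₂
  -- TTTT : plain RDP of G
  · obtain ⟨e₁₁, e₁₂, e₂₁, e₂₂, q1, q2, q3, q4, r1, r2, r3, r4⟩ :=
      hG g₁ g₂ h₁ h₂ (hg₁ H11 H12) (hg₂ H21 H22) (hh₁ H11 H21) (hh₂ H12 H22) heq
    exact ⟨e₁₁, e₁₂, e₂₁, e₂₂, fun _ => q1, fun _ => q2, fun _ => q3, fun _ => q4,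
      r1, r2, r3, r4⟩
  -- TTTF : RDP of G after shifting the second column by a central element
  · obtain ⟨t, _, ht1, ht2⟩ := hcd g₂ h₂
    have hs : g₁ + (g₂ + -t) = h₁ + (h₂ + -t) := by rw [← add_assoc, ← add_assoc, heq]
    obtain ⟨e₁₁, e₁₂, e₂₁, e₂₂, q1, q2, q3, q4, r1, r2, r3, r4⟩ :=
      hG g₁ (g₂ + -t) h₁ (h₂ + -t) (hg₁ H11 H12) (nonneg_add_neg ht1)
        (hh₁ H11 H21) (nonneg_add_neg ht2) hs
    refine ⟨e₁₁, e₁₂, e₂₁, e₂₂ + t, fun _ => q1, fun _ => q2, fun _ => q3,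
      fun hz => (H22 hz).elim, r1, ?_, r3, ?_⟩
    · rw [← add_assoc, ← r2, add_assoc, neg_add_cancel, add_zero]
    · rw [← add_assoc, ← r4, add_assoc, neg_add_cancel, add_zero]
  -- TTFT : solution Q
  · exact ⟨g₁, 0, -g₁ + h₁, h₂, fun _ => hg₁ H11 H12, fun _ => le_refl 0,
      fun hz => (H21 hz).elim, fun _ => hh₂ H12 H22, eQ1, eQ2, eQ3, eQ4⟩
  -- TTFF : solution Q
  · exact ⟨g₁, 0, -g₁ + h₁, h₂, fun _ => hg₁ H11 H12, fun _ => le_refl 0,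
      fun hz => (H21 hz).elim, fun hz => (H22 hz).elim, eQ1, eQ2, eQ3, eQ4⟩
  -- TFTT : solution P
  · exact ⟨h₁, -h₁ + g₁, 0, g₂, fun _ => hh₁ H11 H21, fun hz => (H12 hz).elim,
      fun _ => le_refl 0, fun _ => hg₂ H21 H22, eP1, eP2, eP3, eP4⟩
  -- TFTF : solution P
  · exact ⟨h₁, -h₁ + g₁, 0, g₂, fun _ => hh₁ H11 H21, fun hz => (H12 hz).elim,
      fun _ => le_refl 0, fun hz => (H22 hz).elim, eP1, eP2, eP3, eP4⟩
  -- TFFT : diag family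
  · obtain ⟨d₁₁, d₁₂, d₂₁, d₂₂, q1, q4, r1, r2, r3, r4⟩ := diag
    exact ⟨d₁₁, d₁₂, d₂₁, d₂₂, fun _ => q1, fun hz => (H12 hz).elim,
      fun hz => (H21 hz).elim, fun _ => q4, r1, r2, r3, r4⟩
  -- TFFF : diag family
  · obtain ⟨d₁₁, d₁₂, d₂₁, d₂₂, q1, q4, r1, r2, r3, r4⟩ := diag
    exact ⟨d₁₁, d₁₂, d₂₁, d₂₂, fun _ => q1, fun hz => (H12 hz).elim,
      fun hz => (H21 hz).elim, fun hz => (H22 hz).elim, r1, r2, r3, r4⟩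
  -- FTTT : RDP of G after shifting the first column by a central element
  · obtain ⟨t, _, ht1, ht2⟩ := hcd g₁ h₁
    have hs : (-t + g₁) + g₂ = (-t + h₁) + h₂ := by rw [add_assoc, add_assoc, heq]
    obtain ⟨e₁₁, e₁₂, e₂₁, e₂₂, q1, q2, q3, q4, r1, r2, r3, r4⟩ :=
      hG (-t + g₁) g₂ (-t + h₁) h₂ (nonneg_neg_add ht1) (hg₂ H21 H22)
        (nonneg_neg_add ht2) (hh₂ H12 H22) hs
    refine ⟨t + e₁₁, e₁₂, e₂₁, e₂₂, fun hz => (H11 hz).elim, fun _ => q2,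
      fun _ => q3, fun _ => q4, ?_, r2, ?_, r4⟩
    · rw [add_assoc, ← r1, add_neg_cancel_left]
    · rw [add_assoc, ← r3, add_neg_cancel_left]
  -- FTTF : anti family
  · obtain ⟨d₁₁, d₁₂, d₂₁, d₂₂, q2, q3, r1, r2, r3, r4⟩ := anti
    exact ⟨d₁₁, d₁₂, d₂₁, d₂₂, fun hz => (H11 hz).elim, fun _ => q2,
      fun _ => q3, fun hz => (H22 hz).elim, r1, r2, r3, r4⟩
  -- FTFT : solution Q
  · exact ⟨g₁, 0, -g₁ + h₁, h₂, fun hz => (H11 hz).elim, fun _ => le_refl 0,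
      fun hz => (H21 hz).elim, fun _ => hh₂ H12 H22, eQ1, eQ2, eQ3, eQ4⟩
  -- FTFF : anti family
  · obtain ⟨d₁₁, d₁₂, d₂₁, d₂₂, q2, q3, r1, r2, r3, r4⟩ := anti
    exact ⟨d₁₁, d₁₂, d₂₁, d₂₂, fun hz => (H11 hz).elim, fun _ => q2,
      fun _ => q3, fun hz => (H22 hz).elim, r1, r2, r3, r4⟩
  -- FFTT : solution P
  · exact ⟨h₁, -h₁ + g₁, 0, g₂, fun hz => (H11 hz).elim, fun hz => (H12 hz).elim,
      fun _ => le_refl 0, fun _ => hg₂ H21 H22, eP1, eP2, eP3, eP4⟩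
  -- FFTF : anti family
  · obtain ⟨d₁₁, d₁₂, d₂₁, d₂₂, q2, q3, r1, r2, r3, r4⟩ := anti
    exact ⟨d₁₁, d₁₂, d₂₁, d₂₂, fun hz => (H11 hz).elim, fun _ => q2,
      fun _ => q3, fun hz => (H22 hz).elim, r1, r2, r3, r4⟩
  -- FFFT : diag family
  · obtain ⟨d₁₁, d₁₂, d₂₁, d₂₂, q1, q4, r1, r2, r3, r4⟩ := diag
    exact ⟨d₁₁, d₁₂, d₂₁, d₂₂, fun hz => (H11 hz).elim, fun hz => (H12 hz).elim,
      fun hz => (H21 hz).elim, fun _ => q4, r1, r2, r3, r4⟩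
  -- FFFF : solution P
  · exact ⟨h₁, -h₁ + g₁, 0, g₂, fun hz => (H11 hz).elim, fun hz => (H12 hz).elim,
      fun _ => le_refl 0, fun hz => (H22 hz).elim, eP1, eP2, eP3, eP4⟩

end POGroup

section LexHelpers

variable {A G : Type*} [AddGroup A] [PartialOrder A] [AddGroup G] [PartialOrder G]

lemma fst_nonneg {x : A ×ₗ G} (h : 0 ≤ x) : 0 ≤ (ofLex x).1 := by
  rcases Prod.Lex.le_iff.1 h with h' | h'
  · exact le_of_lt h'
  · exact le_of_eq h'.1

lemma snd_nonneg_of_fst_eq_zero {x : A ×ₗ G} (h : 0 ≤ x) (hf : (ofLex x).1 = 0) :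
    0 ≤ (ofLex x).2 := by
  rcases Prod.Lex.le_iff.1 h with h' | h'
  · rw [hf] at h'
    exact absurd h' (lt_irrefl 0)
  · exact h'.2

lemma mk_nonneg {a : A} {g : G} (ha : 0 ≤ a) (hg : a = 0 → 0 ≤ g) :
    0 ≤ toLex (a, g) := by
  rcases ha.eq_or_lt with h | h
  · exact Prod.Lex.le_iff.2 (Or.inr ⟨h, hg h.symm⟩)
  · exact Prod.Lex.le_iff.2 (Or.inl h)

end LexHelpers

end RDPAux

/-- If `A` is a po-group and `G` is a com-directed po-group, then the
lexicographic product `A ×ₗ G` satisfies RDP iff both `A` and `G` satisfy RDP. -/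
theorem rdp_lex_iff_comDirected {A G : Type*}
    [AddGroup A] [PartialOrder A]
    [CovariantClass A A (· + ·) (· ≤ ·)]
    [CovariantClass A A (Function.swap (· + ·)) (· ≤ ·)]
    [AddGroup G] [PartialOrder G]
    [CovariantClass G G (· + ·) (· ≤ ·)]
    [CovariantClass G G (Function.swap (· + ·)) (· ≤ ·)]
    (hcd : ComDirected G) :
    RDP (A ×ₗ G) ↔ RDP A ∧ RDP G := by
  constructor
  · intro h
    constructor
    · -- RDP A
      intro a₁ a₂ b₁ b₂ p1 p2 p3 p4 heq
      have heqL : toLex (a₁, (0 : G)) + toLex (a₂, (0 : G))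
          = toLex (b₁, (0 : G)) + toLex (b₂, (0 : G)) := by
        show toLex (a₁ + a₂, (0 : G) + 0) = toLex (b₁ + b₂, (0 : G) + 0)
        rw [heq]
      obtain ⟨c₁₁, c₁₂, c₂₁, c₂₂, q1, q2, q3, q4, r1, r2, r3, r4⟩ :=
        h (toLex (a₁, 0)) (toLex (a₂, 0)) (toLex (b₁, 0)) (toLex (b₂, 0))
          (RDPAux.mk_nonneg p1 (fun _ => le_refl 0))
          (RDPAux.mk_nonneg p2 (fun _ => le_refl 0))
          (RDPAux.mk_nonneg p3 (fun _ => le_refl 0))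
          (RDPAux.mk_nonneg p4 (fun _ => le_refl 0)) heqL
      refine ⟨(ofLex c₁₁).1, (ofLex c₁₂).1, (ofLex c₂₁).1, (ofLex c₂₂).1,
        RDPAux.fst_nonneg q1, RDPAux.fst_nonneg q2, RDPAux.fst_nonneg q3,
        RDPAux.fst_nonneg q4, ?_, ?_, ?_, ?_⟩
      · exact congrArg (fun x : A ×ₗ G => (ofLex x).1) r1
      · exact congrArg (fun x : A ×ₗ G => (ofLex x).1) r2
      · exact congrArg (fun x : A ×ₗ G => (ofLex x).1) r3
      · exact congrArg (fun x : A ×ₗ G => (ofLex x).1) r4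
    · -- RDP G
      intro g₁ g₂ h₁ h₂ p1 p2 p3 p4 heq
      have heqL : toLex ((0 : A), g₁) + toLex ((0 : A), g₂)
          = toLex ((0 : A), h₁) + toLex ((0 : A), h₂) := by
        show toLex ((0 : A) + 0, g₁ + g₂) = toLex ((0 : A) + 0, h₁ + h₂)
        rw [heq]
      obtain ⟨c₁₁, c₁₂, c₂₁, c₂₂, q1, q2, q3, q4, r1, r2, r3, r4⟩ :=
        h (toLex (0, g₁)) (toLex (0, g₂)) (toLex (0, h₁)) (toLex (0, h₂))
          (RDPAux.mk_nonneg (le_refl 0) (fun _ => p1))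
          (RDPAux.mk_nonneg (le_refl 0) (fun _ => p2))
          (RDPAux.mk_nonneg (le_refl 0) (fun _ => p3))
          (RDPAux.mk_nonneg (le_refl 0) (fun _ => p4)) heqL
      have s1 : (0 : A) = (ofLex c₁₁).1 + (ofLex c₁₂).1 :=
        congrArg (fun x : A ×ₗ G => (ofLex x).1) r1
      have s2 : (0 : A) = (ofLex c₂₁).1 + (ofLex c₂₂).1 :=
        congrArg (fun x : A ×ₗ G => (ofLex x).1) r2
      have s3 : (0 : A) = (ofLex c₁₁).1 + (ofLex c₂₁).1 :=
        congrArg (fun x : A ×ₗ G => (ofLex x).1) r3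
      have z1 := RDPAux.eq_zero_pair_of_nonneg (RDPAux.fst_nonneg q1)
        (RDPAux.fst_nonneg q2) s1.symm
      have z2 := RDPAux.eq_zero_pair_of_nonneg (RDPAux.fst_nonneg q3)
        (RDPAux.fst_nonneg q4) s2.symm
      refine ⟨(ofLex c₁₁).2, (ofLex c₁₂).2, (ofLex c₂₁).2, (ofLex c₂₂).2,
        RDPAux.snd_nonneg_of_fst_eq_zero q1 z1.1,
        RDPAux.snd_nonneg_of_fst_eq_zero q2 z1.2,
        RDPAux.snd_nonneg_of_fst_eq_zero q3 z2.1,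
        RDPAux.snd_nonneg_of_fst_eq_zero q4 z2.2, ?_, ?_, ?_, ?_⟩
      · exact congrArg (fun x : A ×ₗ G => (ofLex x).2) r1
      · exact congrArg (fun x : A ×ₗ G => (ofLex x).2) r2
      · exact congrArg (fun x : A ×ₗ G => (ofLex x).2) r3
      · exact congrArg (fun x : A ×ₗ G => (ofLex x).2) r4
  · rintro ⟨hA, hG⟩ x₁ x₂ y₁ y₂ p1 p2 p3 p4 heq
    have ea : (ofLex x₁).1 + (ofLex x₂).1 = (ofLex y₁).1 + (ofLex y₂).1 :=
      congrArg (fun x : A ×ₗ G => (ofLex x).1) heq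
    have eg : (ofLex x₁).2 + (ofLex x₂).2 = (ofLex y₁).2 + (ofLex y₂).2 :=
      congrArg (fun x : A ×ₗ G => (ofLex x).2) heq
    obtain ⟨c₁₁, c₁₂, c₂₁, c₂₂, q1, q2, q3, q4, r1, r2, r3, r4⟩ :=
      hA _ _ _ _ (RDPAux.fst_nonneg p1) (RDPAux.fst_nonneg p2)
        (RDPAux.fst_nonneg p3) (RDPAux.fst_nonneg p4) ea
    obtain ⟨d₁₁, d₁₂, d₂₁, d₂₂, u1, u2, u3, u4, e1, e2, e3, e4⟩ :=
      RDPAux.solveG hcd hG _ _ _ _ eg (c₁₁ = 0) (c₁₂ = 0) (c₂₁ = 0) (c₂₂ = 0)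
        (fun u v => RDPAux.snd_nonneg_of_fst_eq_zero p1 (by rw [r1, u, v, add_zero]))
        (fun u v => RDPAux.snd_nonneg_of_fst_eq_zero p2 (by rw [r2, u, v, add_zero]))
        (fun u v => RDPAux.snd_nonneg_of_fst_eq_zero p3 (by rw [r3, u, v, add_zero]))
        (fun u v => RDPAux.snd_nonneg_of_fst_eq_zero p4 (by rw [r4, u, v, add_zero]))
    refine ⟨toLex (c₁₁, d₁₁), toLex (c₁₂, d₁₂), toLex (c₂₁, d₂₁), toLex (c₂₂, d₂₂),
      RDPAux.mk_nonneg q1 u1, RDPAux.mk_nonneg q2 u2, RDPAux.mk_nonneg q3 u3,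
      RDPAux.mk_nonneg q4 u4, ?_, ?_, ?_, ?_⟩
    · exact congrArg toLex (Prod.ext r1 e1)
    · exact congrArg toLex (Prod.ext r2 e2)
    · exact congrArg toLex (Prod.ext r3 e3)
    · exact congrArg toLex (Prod.ext r4 e4)
end

section
/- Let A be a po-group with RDP such that for any two non-comparable elements a,b ∈ A⁺\{0} there exists d' ∈ A with 0 < d' ≤ a, d' ≤ b, a+d' = d'+a and b+d' = d'+b. Let G be a directed po-group with RDP. Then the lexicographic product A ×⃗ G satisfies RDP. -/
section helpers

variable {A G : Type*} [AddGroup A] [PartialOrder A] [AddGroup G] [PartialOrder G]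

lemma lex_cases {p : A ×ₗ G} (h : 0 ≤ p) :
    0 < (ofLex p).1 ∨ ((ofLex p).1 = 0 ∧ 0 ≤ (ofLex p).2) := by
  obtain ⟨a, g⟩ := p
  have h' : toLex ((0 : A), (0 : G)) ≤ toLex (a, g) := h
  rcases Prod.Lex.le_iff.1 h' with h'' | ⟨h1, h2⟩
  · exact Or.inl h''
  · exact Or.inr ⟨h1.symm, h2⟩

lemma lex_pos_s12 {a : A} (h : 0 < a) (g : G) : (0 : A ×ₗ G) ≤ toLex (a, g) := by
  have : toLex ((0 : A), (0 : G)) ≤ toLex (a, g) := Prod.Lex.le_iff.2 (Or.inl h)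
  exact this

lemma lex_nn {a : A} {g : G} (ha : 0 ≤ a) (hg : 0 ≤ g) : (0 : A ×ₗ G) ≤ toLex (a, g) := by
  rcases ha.lt_or_eq with h | h
  · exact lex_pos_s12 h g
  · have : toLex ((0 : A), (0 : G)) ≤ toLex (a, g) := Prod.Lex.le_iff.2 (Or.inr ⟨h, hg⟩)
    exact this

lemma lex_build {a₁ a₂ b₁ b₂ c₁₁ c₁₂ c₂₁ c₂₂ : A} {g₁ g₂ h₁ h₂ k₁₁ k₁₂ k₂₁ k₂₂ : G}
    (H11 : (0 : A ×ₗ G) ≤ toLex (c₁₁, k₁₁)) (H12 : (0 : A ×ₗ G) ≤ toLex (c₁₂, k₁₂))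
    (H21 : (0 : A ×ₗ G) ≤ toLex (c₂₁, k₂₁)) (H22 : (0 : A ×ₗ G) ≤ toLex (c₂₂, k₂₂))
    (e1 : a₁ = c₁₁ + c₁₂) (e2 : a₂ = c₂₁ + c₂₂) (e3 : b₁ = c₁₁ + c₂₁) (e4 : b₂ = c₁₂ + c₂₂)
    (f1 : g₁ = k₁₁ + k₁₂) (f2 : g₂ = k₂₁ + k₂₂) (f3 : h₁ = k₁₁ + k₂₁) (f4 : h₂ = k₁₂ + k₂₂) :
    ∃ C₁₁ C₁₂ C₂₁ C₂₂ : A ×ₗ G, 0 ≤ C₁₁ ∧ 0 ≤ C₁₂ ∧ 0 ≤ C₂₁ ∧ 0 ≤ C₂₂ ∧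
      toLex (a₁, g₁) = C₁₁ + C₁₂ ∧ toLex (a₂, g₂) = C₂₁ + C₂₂ ∧
      toLex (b₁, h₁) = C₁₁ + C₂₁ ∧ toLex (b₂, h₂) = C₁₂ + C₂₂ :=
  ⟨toLex (c₁₁, k₁₁), toLex (c₁₂, k₁₂), toLex (c₂₁, k₂₁), toLex (c₂₂, k₂₂),
    H11, H12, H21, H22,
    by subst e1; subst f1; rfl, by subst e2; subst f2; rfl,
    by subst e3; subst f3; rfl, by subst e4; subst f4; rfl⟩

lemma shiftRDP (hG : RDP G) (g₁ g₂ h₁ h₂ e f : G) (hsum : g₁ + g₂ = h₁ + h₂)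
    (hx1 : 0 ≤ e + g₁) (hx2 : 0 ≤ e + h₁) (hx3 : 0 ≤ g₂ + f) (hx4 : 0 ≤ h₂ + f) :
    ∃ k₁₁ k₁₂ k₂₁ k₂₂ : G, 0 ≤ e + k₁₁ ∧ 0 ≤ k₁₂ ∧ 0 ≤ k₂₁ ∧ 0 ≤ k₂₂ + f ∧
      g₁ = k₁₁ + k₁₂ ∧ g₂ = k₂₁ + k₂₂ ∧ h₁ = k₁₁ + k₂₁ ∧ h₂ = k₁₂ + k₂₂ := by
  obtain ⟨d₁₁, d₁₂, d₂₁, d₂₂, p11, p12, p21, p22, q1, q2, q3, q4⟩ :=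
    hG (e + g₁) (g₂ + f) (e + h₁) (h₂ + f) hx1 hx3 hx2 hx4 (by
      simp only [add_assoc]
      exact congrArg (e + ·) (by rw [← add_assoc, ← add_assoc, hsum]))
  refine ⟨-e + d₁₁, d₁₂, d₂₁, d₂₂ + -f, ?_, p12, p21, ?_, ?_, ?_, ?_, ?_⟩
  · rwa [add_neg_cancel_left]
  · rwa [neg_add_cancel_right]
  · rw [add_assoc, ← q1, neg_add_cancel_left]
  · rw [← add_assoc, ← q2, add_neg_cancel_right]
  · rw [add_assoc, ← q3, neg_add_cancel_left]
  · rw [← add_assoc, ← q4, add_neg_cancel_right]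

end helpers

/-- Let `A` be a po-group with RDP such that for any two non-comparable
`a, b ∈ A⁺ \ {0}` there is `d'` with `0 < d' ≤ a`, `d' ≤ b`, `a + d' = d' + a` and
`b + d' = d' + b`. If `G` is a directed po-group with RDP, then the lexicographic product
`A ×ₗ G` satisfies RDP. -/
theorem rdp_lex_of_commuting_lower_bounds {A G : Type*}
    [AddGroup A] [PartialOrder A]
    [CovariantClass A A (· + ·) (· ≤ ·)]
    [CovariantClass A A (Function.swap (· + ·)) (· ≤ ·)]
    [AddGroup G] [PartialOrder G]
    [CovariantClass G G (· + ·) (· ≤ ·)]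
    [CovariantClass G G (Function.swap (· + ·)) (· ≤ ·)]
    (hA : RDP A)
    (hcom : ∀ a b : A, 0 ≤ a → a ≠ 0 → 0 ≤ b → b ≠ 0 → ¬ a ≤ b → ¬ b ≤ a →
      ∃ d' : A, 0 < d' ∧ d' ≤ a ∧ d' ≤ b ∧ a + d' = d' + a ∧ b + d' = d' + b)
    (hdir : ∀ x y : G, ∃ z : G, x ≤ z ∧ y ≤ z)
    (hG : RDP G) :
    RDP (A ×ₗ G) := by
  intro p₁ p₂ q₁ q₂ hp₁ hp₂ hq₁ hq₂ hsum
  obtain ⟨a₁, g₁⟩ := p₁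
  obtain ⟨a₂, g₂⟩ := p₂
  obtain ⟨b₁, h₁⟩ := q₁
  obtain ⟨b₂, h₂⟩ := q₂
  have P₁ : 0 < a₁ ∨ (a₁ = 0 ∧ 0 ≤ g₁) := lex_cases hp₁
  have P₂ : 0 < a₂ ∨ (a₂ = 0 ∧ 0 ≤ g₂) := lex_cases hp₂
  have P₃ : 0 < b₁ ∨ (b₁ = 0 ∧ 0 ≤ h₁) := lex_cases hq₁
  have P₄ : 0 < b₂ ∨ (b₂ = 0 ∧ 0 ≤ h₂) := lex_cases hq₂
  have ha : a₁ + a₂ = b₁ + b₂ := congrArg (fun p : A ×ₗ G => (ofLex p).1) hsum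
  have hg : g₁ + g₂ = h₁ + h₂ := congrArg (fun p : A ×ₗ G => (ofLex p).2) hsum
  have ha₁ : 0 ≤ a₁ := by rcases P₁ with h | h; exacts [h.le, h.1.ge]
  have ha₂ : 0 ≤ a₂ := by rcases P₂ with h | h; exacts [h.le, h.1.ge]
  have hb₁ : 0 ≤ b₁ := by rcases P₃ with h | h; exacts [h.le, h.1.ge]
  have hb₂ : 0 ≤ b₂ := by rcases P₄ with h | h; exacts [h.le, h.1.ge]
  have hz₁ : a₁ = 0 → 0 ≤ g₁ :=
    fun h => (P₁.resolve_left (fun hlt => absurd (h ▸ hlt) (lt_irrefl 0))).2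
  have hz₂ : a₂ = 0 → 0 ≤ g₂ :=
    fun h => (P₂.resolve_left (fun hlt => absurd (h ▸ hlt) (lt_irrefl 0))).2
  have hz₃ : b₁ = 0 → 0 ≤ h₁ :=
    fun h => (P₃.resolve_left (fun hlt => absurd (h ▸ hlt) (lt_irrefl 0))).2
  have hz₄ : b₂ = 0 → 0 ≤ h₂ :=
    fun h => (P₄.resolve_left (fun hlt => absurd (h ▸ hlt) (lt_irrefl 0))).2
  by_cases e₁ : a₁ = 0
  · by_cases e₂ : a₂ = 0
    · -- case 1 : everything is zero
      have hb : b₁ + b₂ = 0 := by rw [← ha, e₁, e₂, add_zero]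
      have hb1 : b₁ = 0 := le_antisymm
        (by have := le_add_of_nonneg_right (a := b₁) hb₂; rwa [hb] at this) hb₁
      have hb2 : b₂ = 0 := by rwa [hb1, zero_add] at hb
      obtain ⟨k₁₁, k₁₂, k₂₁, k₂₂, t1, t2, t3, t4, f1, f2, f3, f4⟩ :=
        hG g₁ g₂ h₁ h₂ (hz₁ e₁) (hz₂ e₂) (hz₃ hb1) (hz₄ hb2) hg
      exact lex_build (lex_nn (le_refl (0 : A)) t1) (lex_nn (le_refl (0 : A)) t2)
        (lex_nn (le_refl (0 : A)) t3) (lex_nn (le_refl (0 : A)) t4)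
        (by rw [e₁, add_zero]) (by rw [e₂, add_zero]) (by rw [hb1, add_zero])
        (by rw [hb2, add_zero]) f1 f2 f3 f4
    · have pa₂ : 0 < a₂ := lt_of_le_of_ne ha₂ (Ne.symm e₂)
      by_cases e₃ : b₁ = 0
      · -- case 2 : a₁ = 0, b₁ = 0, a₂ = b₂ ≠ 0
        have hb2 : a₂ = b₂ := by rwa [e₁, e₃, zero_add, zero_add] at ha
        obtain ⟨f, hf1, hf2⟩ := hdir (-g₂) (-h₂)
        obtain ⟨k₁₁, k₁₂, k₂₁, k₂₂, t1, t2, t3, t4, f1, f2, f3, f4⟩ :=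
          shiftRDP hG g₁ g₂ h₁ h₂ 0 f hg
            (by rw [zero_add]; exact hz₁ e₁) (by rw [zero_add]; exact hz₃ e₃)
            (by have := add_le_add_right hf1 g₂; rwa [add_neg_cancel] at this)
            (by have := add_le_add_right hf2 h₂; rwa [add_neg_cancel] at this)
        have t1' : 0 ≤ k₁₁ := by rwa [zero_add] at t1
        exact lex_build (lex_nn (le_refl (0 : A)) t1') (lex_nn (le_refl (0 : A)) t2)
          (lex_nn (le_refl (0 : A)) t3) (lex_pos_s12 pa₂ k₂₂)
          (by rw [e₁, add_zero]) (by rw [zero_add]) (by rw [e₃, add_zero])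
          (by rw [zero_add, hb2]) f1 f2 f3 f4
      · by_cases e₄ : b₂ = 0
        · -- case 3 : a₁ = 0, b₂ = 0, a₂ = b₁ ≠ 0
          have hb1 : a₂ = b₁ := by rwa [e₁, e₄, zero_add, add_zero] at ha
          exact lex_build (lex_nn (le_refl (0 : A)) (hz₁ e₁))
            (lex_nn (le_refl (0 : A)) (le_refl (0 : G)))
            (lex_pos_s12 pa₂ (-g₁ + h₁)) (lex_nn (le_refl (0 : A)) (hz₄ e₄))
            (by rw [e₁, add_zero]) (by rw [add_zero]) (by rw [zero_add, hb1])
            (by rw [e₄, add_zero])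
            (by rw [add_zero]) (by rw [add_assoc, ← hg, neg_add_cancel_left])
            (by rw [add_neg_cancel_left]) (by rw [zero_add])
        · -- case 4 : a₁ = 0, b₁ ≠ 0, b₂ ≠ 0
          have pb₁ : 0 < b₁ := lt_of_le_of_ne hb₁ (Ne.symm e₃)
          have pb₂ : 0 < b₂ := lt_of_le_of_ne hb₂ (Ne.symm e₄)
          have hs : a₂ = b₁ + b₂ := by rwa [e₁, zero_add] at ha
          exact lex_build (lex_nn (le_refl (0 : A)) (hz₁ e₁))
            (lex_nn (le_refl (0 : A)) (le_refl (0 : G)))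
            (lex_pos_s12 pb₁ (-g₁ + h₁)) (lex_pos_s12 pb₂ h₂)
            (by rw [e₁, add_zero]) hs (by rw [zero_add]) (by rw [zero_add])
            (by rw [add_zero]) (by rw [add_assoc, ← hg, neg_add_cancel_left])
            (by rw [add_neg_cancel_left]) (by rw [zero_add])
  · have pa₁ : 0 < a₁ := lt_of_le_of_ne ha₁ (Ne.symm e₁)
    by_cases e₂ : a₂ = 0
    · by_cases e₃ : b₁ = 0
      · -- case 5 : a₂ = 0, b₁ = 0, a₁ = b₂ ≠ 0
        have hb : a₁ = b₂ := by rwa [e₂, e₃, add_zero, zero_add] at ha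
        exact lex_build (lex_nn (le_refl (0 : A)) (hz₃ e₃)) (lex_pos_s12 pa₁ (-h₁ + g₁))
          (lex_nn (le_refl (0 : A)) (le_refl (0 : G))) (lex_nn (le_refl (0 : A)) (hz₂ e₂))
          (by rw [zero_add]) (by rw [e₂, add_zero]) (by rw [e₃, add_zero])
          (by rw [add_zero, hb])
          (by rw [add_neg_cancel_left]) (by rw [zero_add]) (by rw [add_zero])
          (by rw [add_assoc, hg, neg_add_cancel_left])
      · by_cases e₄ : b₂ = 0
        · -- case 6 : a₂ = 0, b₂ = 0, a₁ = b₁ ≠ 0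
          have hb : a₁ = b₁ := by rwa [e₂, e₄, add_zero, add_zero] at ha
          obtain ⟨e, he1, he2⟩ := hdir (-g₁) (-h₁)
          obtain ⟨k₁₁, k₁₂, k₂₁, k₂₂, t1, t2, t3, t4, f1, f2, f3, f4⟩ :=
            shiftRDP hG g₁ g₂ h₁ h₂ e 0 hg
              (by have := add_le_add_left he1 g₁; rwa [neg_add_cancel] at this)
              (by have := add_le_add_left he2 h₁; rwa [neg_add_cancel] at this)
              (by rw [add_zero]; exact hz₂ e₂) (by rw [add_zero]; exact hz₄ e₄)
          have t4' : 0 ≤ k₂₂ := by rwa [add_zero] at t4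
          exact lex_build (lex_pos_s12 pa₁ k₁₁) (lex_nn (le_refl (0 : A)) t2)
            (lex_nn (le_refl (0 : A)) t3) (lex_nn (le_refl (0 : A)) t4')
            (by rw [add_zero]) (by rw [e₂, add_zero]) (by rw [add_zero, hb])
            (by rw [e₄, add_zero]) f1 f2 f3 f4
        · -- case 7 : a₂ = 0, b₁ ≠ 0, b₂ ≠ 0
          have pb₁ : 0 < b₁ := lt_of_le_of_ne hb₁ (Ne.symm e₃)
          have pb₂ : 0 < b₂ := lt_of_le_of_ne hb₂ (Ne.symm e₄)
          have hs : a₁ = b₁ + b₂ := by rwa [e₂, add_zero] at ha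
          exact lex_build (lex_pos_s12 pb₁ h₁) (lex_pos_s12 pb₂ (-h₁ + g₁))
            (lex_nn (le_refl (0 : A)) (le_refl (0 : G))) (lex_nn (le_refl (0 : A)) (hz₂ e₂))
            hs (by rw [e₂, add_zero]) (by rw [add_zero]) (by rw [add_zero])
            (by rw [add_neg_cancel_left]) (by rw [zero_add]) (by rw [add_zero])
            (by rw [add_assoc, hg, neg_add_cancel_left])
    · have pa₂ : 0 < a₂ := lt_of_le_of_ne ha₂ (Ne.symm e₂)
      by_cases e₃ : b₁ = 0
      · -- case 8 : b₁ = 0, a₁ ≠ 0, a₂ ≠ 0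
        have hs : a₁ + a₂ = b₂ := by rwa [e₃, zero_add] at ha
        exact lex_build (lex_nn (le_refl (0 : A)) (hz₃ e₃)) (lex_pos_s12 pa₁ (-h₁ + g₁))
          (lex_nn (le_refl (0 : A)) (le_refl (0 : G))) (lex_pos_s12 pa₂ g₂)
          (by rw [zero_add]) (by rw [zero_add]) (by rw [e₃, add_zero]) (by rw [← hs])
          (by rw [add_neg_cancel_left]) (by rw [zero_add]) (by rw [add_zero])
          (by rw [add_assoc, hg, neg_add_cancel_left])
      · by_cases e₄ : b₂ = 0
        · -- case 9 : b₂ = 0, a₁ ≠ 0, a₂ ≠ 0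
          have hs : a₁ + a₂ = b₁ := by rwa [e₄, add_zero] at ha
          exact lex_build (lex_pos_s12 pa₁ g₁) (lex_nn (le_refl (0 : A)) (le_refl (0 : G)))
            (lex_pos_s12 pa₂ (-g₁ + h₁)) (lex_nn (le_refl (0 : A)) (hz₄ e₄))
            (by rw [add_zero]) (by rw [add_zero]) (by rw [← hs]) (by rw [e₄, add_zero])
            (by rw [add_zero]) (by rw [add_assoc, ← hg, neg_add_cancel_left])
            (by rw [add_neg_cancel_left]) (by rw [zero_add])
        · -- case 10 : all four components nonzero
          have pb₁ : 0 < b₁ := lt_of_le_of_ne hb₁ (Ne.symm e₃)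
          have pb₂ : 0 < b₂ := lt_of_le_of_ne hb₂ (Ne.symm e₄)
          obtain ⟨d₁, hd₁, hd₁a, hd₁b⟩ : ∃ d : A, 0 < d ∧ d ≤ a₁ ∧ d ≤ b₁ := by
            by_cases hc : a₁ ≤ b₁
            · exact ⟨a₁, pa₁, le_rfl, hc⟩
            · by_cases hc' : b₁ ≤ a₁
              · exact ⟨b₁, pb₁, hc', le_rfl⟩
              · obtain ⟨d, h0, hda, hdb, -, -⟩ := hcom a₁ b₁ ha₁ e₁ hb₁ e₃ hc hc'
                exact ⟨d, h0, hda, hdb⟩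
          obtain ⟨d₂, hd₂, hd₂a, hd₂b⟩ : ∃ d : A, 0 < d ∧ d ≤ a₂ ∧ d ≤ b₂ := by
            by_cases hc : a₂ ≤ b₂
            · exact ⟨a₂, pa₂, le_rfl, hc⟩
            · by_cases hc' : b₂ ≤ a₂
              · exact ⟨b₂, pb₂, hc', le_rfl⟩
              · obtain ⟨d, h0, hda, hdb, -, -⟩ := hcom a₂ b₂ ha₂ e₂ hb₂ e₄ hc hc'
                exact ⟨d, h0, hda, hdb⟩
          obtain ⟨e₁₁, e₁₂, e₂₁, e₂₂, q1, q2, q3, q4, r1, r2, r3, r4⟩ :=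
            hA (-d₁ + a₁) (a₂ + -d₂) (-d₁ + b₁) (b₂ + -d₂)
              (by have := add_le_add_right hd₁a (-d₁); rwa [neg_add_cancel] at this)
              (by have := add_le_add_left hd₂a (-d₂); rwa [add_neg_cancel] at this)
              (by have := add_le_add_right hd₁b (-d₁); rwa [neg_add_cancel] at this)
              (by have := add_le_add_left hd₂b (-d₂); rwa [add_neg_cancel] at this)
              (by
                simp only [add_assoc]
                exact congrArg (-d₁ + ·) (by rw [← add_assoc, ← add_assoc, ha]))
          obtain ⟨e, he1, he2⟩ := hdir (-g₁) (-h₁)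
          obtain ⟨f, hf1, hf2⟩ := hdir (-g₂) (-h₂)
          obtain ⟨k₁₁, k₁₂, k₂₁, k₂₂, t1, t2, t3, t4, f1, f2, f3, f4⟩ :=
            shiftRDP hG g₁ g₂ h₁ h₂ e f hg
              (by have := add_le_add_left he1 g₁; rwa [neg_add_cancel] at this)
              (by have := add_le_add_left he2 h₁; rwa [neg_add_cancel] at this)
              (by have := add_le_add_right hf1 g₂; rwa [add_neg_cancel] at this)
              (by have := add_le_add_right hf2 h₂; rwa [add_neg_cancel] at this)
          have pc₁ : (0 : A) < d₁ + e₁₁ := lt_of_lt_of_le hd₁ (le_add_of_nonneg_right q1)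
          have pc₂ : (0 : A) < e₂₂ + d₂ := lt_of_lt_of_le hd₂ (le_add_of_nonneg_left q4)
          exact lex_build (lex_pos_s12 pc₁ k₁₁) (lex_nn q2 t2) (lex_nn q3 t3) (lex_pos_s12 pc₂ k₂₂)
            (by rw [add_assoc, ← r1, add_neg_cancel_left])
            (by rw [← add_assoc, ← r2, neg_add_cancel_right])
            (by rw [add_assoc, ← r3, add_neg_cancel_left])
            (by rw [← add_assoc, ← r4, neg_add_cancel_right])
            f1 f2 f3 f4
end
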